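/- arXiv:1404.7599 — 9 statements merged into one kernel-verified Lean document; each statement's English description precedes it below -/
import Mathlib

section
/- Let (𝒳, 𝒵, 𝒴) be a cotorsion triple in 𝒜. Then the subcategory 𝒵 is thick (i.e., 𝒵 is closed under direct summands and, for every short exact sequence 0 → A → B → C → 0 in 𝒜 in which two of the objects A, B, C lie in 𝒵, the third also lies in 𝒵) if and only if the cotorsion triple (𝒳, 𝒵, 𝒴) is hereditary. -/
open CategoryTheory Abelian Limits ZeroObject

universe v u

variable {A : Type u} [Category.{v} A] [Abelian A]
  [EnoughProjectives A] [EnoughInjectives A]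

noncomputable instance : HasExt.{max u v} A :=
  have := HasDerivedCategory.standard A
  hasExt_of_hasDerivedCategory A

/-- Vanishing of the `n`-th Ext group. -/
def extZero (M N : A) (n : ℕ) : Prop := Subsingleton (Abelian.Ext M N n)

/-- `(X, Z)` is a cotorsion pair: `X` consists exactly of the objects `M` with
`Ext¹(M, Z') = 0` for all `Z' ∈ Z`, and `Z` consists exactly of the objects `M`
with `Ext¹(X', M) = 0` for all `X' ∈ X`. -/
def IsCotorsionPair (X Z : Set A) : Prop :=
  (∀ M : A, M ∈ X ↔ ∀ Z' ∈ Z, extZero M Z' 1) ∧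
  (∀ M : A, M ∈ Z ↔ ∀ X' ∈ X, extZero X' M 1)

/-- A cotorsion pair is hereditary if `Ext^i(X', Z') = 0` for all `X' ∈ X`,
`Z' ∈ Z` and all `i ≥ 1`. -/
def IsHereditaryCotorsionPair (X Z : Set A) : Prop :=
  IsCotorsionPair X Z ∧ ∀ X' ∈ X, ∀ Z' ∈ Z, ∀ i : ℕ, 1 ≤ i → extZero X' Z' i

/-- A cotorsion pair is complete if every object `M` admits short exact sequences
`0 → Z' → X' → M → 0` and `0 → M → Z'' → X'' → 0` with `X', X'' ∈ X` and `Z', Z'' ∈ Z`. -/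
def IsCompleteCotorsionPair (X Z : Set A) : Prop :=
  IsCotorsionPair X Z ∧
    ∀ M : A,
      (∃ (Z' X' : A) (f : Z' ⟶ X') (g : X' ⟶ M) (w : f ≫ g = 0),
        (ShortComplex.mk f g w).ShortExact ∧ X' ∈ X ∧ Z' ∈ Z) ∧
      (∃ (Z'' X'' : A) (f : M ⟶ Z'') (g : Z'' ⟶ X'') (w : f ≫ g = 0),
        (ShortComplex.mk f g w).ShortExact ∧ X'' ∈ X ∧ Z'' ∈ Z)

/-- `(X, Z, Y)` is a cotorsion triple if `(X, Z)` and `(Z, Y)` are cotorsion pairs. -/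
def IsCotorsionTriple (X Z Y : Set A) : Prop :=
  IsCotorsionPair X Z ∧ IsCotorsionPair Z Y

/-- A cotorsion triple is hereditary if both constituent cotorsion pairs are hereditary. -/
def IsHereditaryCotorsionTriple (X Z Y : Set A) : Prop :=
  IsHereditaryCotorsionPair X Z ∧ IsHereditaryCotorsionPair Z Y

/-- A cotorsion triple is complete and hereditary if both constituent cotorsion pairs
are complete and hereditary. -/
def IsCompleteHereditaryCotorsionTriple (X Z Y : Set A) : Prop :=
  IsCompleteCotorsionPair X Z ∧ IsCompleteCotorsionPair Z Y ∧
    IsHereditaryCotorsionPair X Z ∧ IsHereditaryCotorsionPair Z Y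

/-- A full subcategory (class of objects) is thick if it is closed under direct
summands and has the two-out-of-three property for short exact sequences. -/
def IsThick (Z : Set A) : Prop :=
  (∀ M N : A, M ∈ Z → (∃ (i : N ⟶ M) (r : M ⟶ N), i ≫ r = 𝟙 N) → N ∈ Z) ∧
  (∀ S : ShortComplex A, S.ShortExact →
    (S.X₁ ∈ Z → S.X₂ ∈ Z → S.X₃ ∈ Z) ∧
    (S.X₁ ∈ Z → S.X₃ ∈ Z → S.X₂ ∈ Z) ∧
    (S.X₂ ∈ Z → S.X₃ ∈ Z → S.X₁ ∈ Z))

universe w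
set_option linter.unusedSectionVars false

noncomputable def homotopyFromSingle {S K : CochainComplex A ℤ} (j : ℤ)
    (hS : ∀ i, i ≠ j → IsZero (S.X i)) [Projective (S.X j)]
    (hK : K.ExactAt j) (f : S ⟶ K) : Homotopy f 0 := by
  rw [K.exactAt_iff' (j-1) j (j+1) (by simp) (by simp)] at hK
  have hf : f.f j ≫ K.d j (j+1) = 0 := by
    rw [f.comm j (j+1), (hS (j+1) (by omega)).eq_of_src (f.f (j+1)) 0, comp_zero]
  let h₀ : S.X j ⟶ K.X (j-1) := hK.liftFromProjective (f.f j) hf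
  have hh₀ : h₀ ≫ K.d (j-1) j = f.f j := hK.liftFromProjective_comp (f.f j) hf
  exact {
    hom := fun i i' => if hc : i = j ∧ i' = j - 1 then
      (S.XIsoOfEq hc.1).hom ≫ h₀ ≫ (K.XIsoOfEq hc.2.symm).hom else 0
    zero := fun i i' hrel => by
      rw [dif_neg]
      rintro ⟨rfl, rfl⟩
      exact hrel (by simp)
    comm := fun i => by
      by_cases hi : i = j
      · subst hi
        rw [dNext_eq _ (show (ComplexShape.up ℤ).Rel i (i+1) by simp),
          prevD_eq _ (show (ComplexShape.up ℤ).Rel (i-1) i by simp)]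
        rw [dif_neg (by omega), dif_pos ⟨rfl, rfl⟩]
        simp [hh₀]
      · apply (hS i hi).eq_of_src }

noncomputable def homotopyToSingle {K T : CochainComplex A ℤ} (j : ℤ)
    (hT : ∀ i, i ≠ j → IsZero (T.X i)) [Injective (T.X j)]
    (hK : K.ExactAt j) (f : K ⟶ T) : Homotopy f 0 := by
  rw [K.exactAt_iff' (j-1) j (j+1) (by simp) (by simp)] at hK
  have hf : K.d (j-1) j ≫ f.f j = 0 := by
    rw [← f.comm (j-1) j, (hT (j-1) (by omega)).eq_of_tgt (f.f (j-1)) 0, zero_comp]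
  let h₀ : K.X (j+1) ⟶ T.X j := hK.descToInjective (f.f j) hf
  have hh₀ : K.d j (j+1) ≫ h₀ = f.f j := hK.comp_descToInjective (f.f j) hf
  exact {
    hom := fun i i' => if hc : i = j + 1 ∧ i' = j then
      (K.XIsoOfEq hc.1).hom ≫ h₀ ≫ (T.XIsoOfEq hc.2.symm).hom else 0
    zero := fun i i' hrel => by
      rw [dif_neg]
      rintro ⟨rfl, rfl⟩
      exact hrel (by simp)
    comm := fun i => by
      by_cases hi : i = j
      · subst hi
        rw [dNext_eq _ (show (ComplexShape.up ℤ).Rel i (i+1) by simp),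
          prevD_eq _ (show (ComplexShape.up ℤ).Rel (i-1) i by simp)]
        rw [dif_pos ⟨rfl, rfl⟩, dif_neg (by omega)]
        simp [hh₀]
      · apply (hT i hi).eq_of_tgt }

namespace CotorsionAux

abbrev Qu := HomotopyCategory.quotient A (ComplexShape.up ℤ)

lemma htpy_from_single_eq_zero {S : CochainComplex A ℤ} (j : ℤ)
    (hS : ∀ i, i ≠ j → IsZero (S.X i)) [Projective (S.X j)]
    {B : HomotopyCategory A (ComplexShape.up ℤ)}
    (hB : IsZero ((HomotopyCategory.homologyFunctor A _ j).obj B))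
    (g : (Qu (A := A)).obj S ⟶ B) : g = 0 := by
  obtain ⟨K⟩ := B
  obtain ⟨g₀, rfl⟩ := (Qu (A := A)).map_surjective g
  have hK : K.ExactAt j := by
    rw [HomologicalComplex.exactAt_iff_isZero_homology]
    exact hB.of_iso ((HomotopyCategory.homologyFunctorFactors A _ j).app K).symm
  rw [HomotopyCategory.eq_of_homotopy _ _ (homotopyFromSingle j hS hK g₀),
    Functor.map_zero]
  rfl

lemma htpy_to_single_eq_zero {T : CochainComplex A ℤ} (j : ℤ)
    (hT : ∀ i, i ≠ j → IsZero (T.X i)) [Injective (T.X j)]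
    {B : HomotopyCategory A (ComplexShape.up ℤ)}
    (hB : IsZero ((HomotopyCategory.homologyFunctor A _ j).obj B))
    (g : B ⟶ (Qu (A := A)).obj T) : g = 0 := by
  obtain ⟨K⟩ := B
  obtain ⟨g₀, rfl⟩ := (Qu (A := A)).map_surjective g
  have hK : K.ExactAt j := by
    rw [HomologicalComplex.exactAt_iff_isZero_homology]
    exact hB.of_iso ((HomotopyCategory.homologyFunctorFactors A _ j).app K).symm
  rw [HomotopyCategory.eq_of_homotopy _ _ (homotopyToSingle j hT hK g₀),
    Functor.map_zero]
  rfl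

section
variable [HasDerivedCategory A]

lemma derived_from_single_eq_zero {S : CochainComplex A ℤ} (j : ℤ)
    (hS : ∀ i, i ≠ j → IsZero (S.X i)) [Projective (S.X j)]
    {B : DerivedCategory A}
    (hB : IsZero ((DerivedCategory.homologyFunctor A j).obj B))
    (φ : DerivedCategory.Qh.obj ((Qu (A := A)).obj S) ⟶ B) : φ = 0 := by
  haveI : (HomotopyCategory.quasiIso A (ComplexShape.up ℤ)).HasLeftCalculusOfFractions := by
    rw [HomotopyCategory.quasiIso_eq_subcategoryAcyclic_W]; infer_instance
  haveI := Localization.essSurj (DerivedCategory.Qh (C := A))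
    (HomotopyCategory.quasiIso A (ComplexShape.up ℤ))
  set e := (DerivedCategory.Qh (C := A)).objObjPreimageIso B with he
  set K₀ := (DerivedCategory.Qh (C := A)).objPreimage B
  obtain ⟨fr, hfr⟩ := Localization.exists_leftFraction DerivedCategory.Qh
    (HomotopyCategory.quasiIso A (ComplexShape.up ℤ)) (φ ≫ e.inv)
  have hY' : IsZero ((HomotopyCategory.homologyFunctor A _ j).obj fr.Y') := by
    have hK₀ : IsZero ((HomotopyCategory.homologyFunctor A _ j).obj K₀) := by
      refine (hB.of_iso ?_).of_iso ((DerivedCategory.homologyFunctorFactorsh A j).app K₀).symm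
      exact (DerivedCategory.homologyFunctor A j).mapIso e
    have : IsIso ((HomotopyCategory.homologyFunctor A _ j).map fr.s) :=
      (HomotopyCategory.mem_quasiIso_iff fr.s).1 fr.hs j
    exact hK₀.of_iso (asIso ((HomotopyCategory.homologyFunctor A _ j).map fr.s)).symm
  have hf0 : fr.f = 0 := htpy_from_single_eq_zero j hS hY' fr.f
  have : (φ ≫ e.inv) ≫ DerivedCategory.Qh.map fr.s = 0 := by
    rw [hfr, fr.map_comp_map_s, hf0, Functor.map_zero]
  have hs : IsIso (DerivedCategory.Qh.map fr.s) :=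
    Localization.inverts _ (HomotopyCategory.quasiIso A (ComplexShape.up ℤ)) _ fr.hs
  rw [← cancel_mono (e.inv), ← cancel_mono (DerivedCategory.Qh.map fr.s)]
  simpa using this

lemma derived_to_single_eq_zero {T : CochainComplex A ℤ} (j : ℤ)
    (hT : ∀ i, i ≠ j → IsZero (T.X i)) [Injective (T.X j)]
    {Bh : HomotopyCategory A (ComplexShape.up ℤ)}
    (hB : IsZero ((HomotopyCategory.homologyFunctor A _ j).obj Bh))
    (φ : DerivedCategory.Qh.obj Bh ⟶ DerivedCategory.Qh.obj ((Qu (A := A)).obj T)) : φ = 0 := by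
  haveI : (HomotopyCategory.quasiIso A (ComplexShape.up ℤ)).HasRightCalculusOfFractions := by
    rw [HomotopyCategory.quasiIso_eq_subcategoryAcyclic_W]; infer_instance
  obtain ⟨fr, hfr⟩ := Localization.exists_rightFraction DerivedCategory.Qh
    (HomotopyCategory.quasiIso A (ComplexShape.up ℤ)) φ
  have hY' : IsZero ((HomotopyCategory.homologyFunctor A _ j).obj fr.X') := by
    have : IsIso ((HomotopyCategory.homologyFunctor A _ j).map fr.s) :=
      (HomotopyCategory.mem_quasiIso_iff fr.s).1 fr.hs j
    exact hB.of_iso (asIso ((HomotopyCategory.homologyFunctor A _ j).map fr.s))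
  have hf0 : fr.f = 0 := htpy_to_single_eq_zero j hT hY' fr.f
  have hs : IsIso (DerivedCategory.Qh.map fr.s) :=
    Localization.inverts _ (HomotopyCategory.quasiIso A (ComplexShape.up ℤ)) _ fr.hs
  rw [← cancel_epi (DerivedCategory.Qh.map fr.s), hfr, fr.map_s_comp_map, hf0,
    Functor.map_zero, comp_zero]


noncomputable def shiftSingleIso (M : A) (n : ℤ) :
    (((DerivedCategory.singleFunctor A 0).obj M)⟦n⟧) ≅
      DerivedCategory.Qh.obj ((Qu (A := A)).obj
        (((HomologicalComplex.single A (ComplexShape.up ℤ) 0).obj M)⟦n⟧)) :=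
  ((DerivedCategory.Qh.commShiftIso n).app _).symm ≪≫
    DerivedCategory.Qh.mapIso (((Qu (A := A)).commShiftIso n).app _).symm

lemma isZero_homology_shift_single (M : A) (n : ℤ) (j : ℤ) (hj : j + n ≠ 0) :
    IsZero ((DerivedCategory.homologyFunctor A j).obj
      (((DerivedCategory.singleFunctor A 0).obj M)⟦n⟧)) := by
  have h2 : (((HomologicalComplex.single A (ComplexShape.up ℤ) 0).obj M)⟦n⟧).ExactAt j := by
    rw [HomologicalComplex.exactAt_iff]
    exact ShortComplex.exact_of_isZero_X₂ _
      (HomologicalComplex.isZero_single_obj_X (ComplexShape.up ℤ) 0 M _ hj)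
  rw [HomologicalComplex.exactAt_iff_isZero_homology] at h2
  exact h2.of_iso ((DerivedCategory.homologyFunctor A j).mapIso (shiftSingleIso M n) ≪≫
    (DerivedCategory.homologyFunctorFactorsh A j).app _ ≪≫
    (HomotopyCategory.homologyFunctorFactors A _ j).app _)

end


section ExtVanish
variable [HasExt.{w} A]

lemma subsingleton_ext_of_projective (P M : A) [Projective P] (n : ℕ) (hn : n ≠ 0) :
    Subsingleton (Abelian.Ext P M n) := by
  letI := HasDerivedCategory.standard A
  suffices h : ∀ z : Abelian.Ext P M n, z.hom = 0 by
    exact ⟨fun x y => Abelian.Ext.ext (by rw [h x, h y])⟩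
  intro z
  haveI : Projective (((HomologicalComplex.single A (ComplexShape.up ℤ) 0).obj P).X 0) :=
    Projective.of_iso (HomologicalComplex.singleObjXSelf (ComplexShape.up ℤ) 0 P).symm
      inferInstance
  exact derived_from_single_eq_zero 0
    (fun i hi => HomologicalComplex.isZero_single_obj_X _ _ _ _ hi)
    (isZero_homology_shift_single M n 0 (by simpa using hn)) z.hom

lemma subsingleton_ext_of_injective (M I : A) [Injective I] (n : ℕ) (hn : n ≠ 0) :
    Subsingleton (Abelian.Ext M I n) := by
  letI := HasDerivedCategory.standard A
  suffices h : ∀ z : Abelian.Ext M I n, z.hom = 0 by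
    exact ⟨fun x y => Abelian.Ext.ext (by rw [h x, h y])⟩
  intro z
  have h1 := shiftSingleIso (A := A) I (n : ℤ)
  haveI : Injective ((((HomologicalComplex.single A (ComplexShape.up ℤ) 0).obj I)⟦(n:ℤ)⟧).X
      (-(n:ℤ))) :=
    Injective.of_iso (HomologicalComplex.singleObjXIsoOfEq (ComplexShape.up ℤ) 0 I
      (-(n:ℤ) + n) (by omega)).symm inferInstance
  have h0 : z.hom ≫ h1.hom = 0 := by
    refine derived_to_single_eq_zero
      (T := ((HomologicalComplex.single A (ComplexShape.up ℤ) 0).obj I)⟦(n:ℤ)⟧) (-(n:ℤ))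
      (fun i hi => HomologicalComplex.isZero_single_obj_X (ComplexShape.up ℤ) 0 I (i + n)
        (by omega)) ?_ _
    · have : (((HomologicalComplex.single A (ComplexShape.up ℤ) 0).obj M)).ExactAt (-(n:ℤ)) :=
        HomologicalComplex.exactAt_single_obj _ _ _ _ (by omega)
      rw [HomologicalComplex.exactAt_iff_isZero_homology] at this
      exact this.of_iso ((HomotopyCategory.homologyFunctorFactors A _ _).app _)
  rw [show z.hom = (z.hom ≫ h1.hom) ≫ h1.inv by simp, h0, zero_comp]

end ExtVanish
end CotorsionAux

namespace CotorsionAux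

lemma extZero_of_forall_eq_zero {M N : A} {n : ℕ} (h : ∀ x : Abelian.Ext M N n, x = 0) :
    extZero M N n :=
  ⟨fun a b => by rw [h a, h b]⟩

lemma eq_zero_of_extZero {M N : A} {n : ℕ} (h : extZero M N n) (x : Abelian.Ext M N n) :
    x = 0 :=
  @Subsingleton.elim _ h x 0

end CotorsionAux

/-- Let `(𝒳, 𝒵, 𝒴)` be a cotorsion triple in `𝒜`. Then `𝒵` is thick if and only
if the cotorsion triple `(𝒳, 𝒵, 𝒴)` is hereditary. -/
theorem thick_iff_hereditary (X Z Y : Set A) (h : IsCotorsionTriple X Z Y) :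
    IsThick Z ↔ IsHereditaryCotorsionTriple X Z Y := by
  obtain ⟨hXZ, hZY⟩ := h
  constructor
  · rintro ⟨hsum, h23⟩
    -- hereditary for the pair (X, Z)
    have hered1 : ∀ i : ℕ, ∀ X' ∈ X, ∀ Z' ∈ Z, extZero X' Z' (i + 1) := by
      intro i
      induction i with
      | zero => exact fun X' hX' Z' hZ' => (hXZ.1 X').1 hX' Z' hZ'
      | succ i ih =>
        intro X' hX' Z' hZ'
        set f := Injective.ι Z' with hf_def
        set S := ShortComplex.mk f (cokernel.π f) (cokernel.condition f) with hS_def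
        have hS : S.ShortExact := { exact := S.exact_of_g_is_cokernel (cokernelIsCokernel f) }
        have hI : Injective.under Z' ∈ Z := (hXZ.2 _).2 (fun X'' _ =>
          CotorsionAux.subsingleton_ext_of_injective X'' _ 1 one_ne_zero)
        have hC : cokernel f ∈ Z := (h23 S hS).1 hZ' hI
        refine CotorsionAux.extZero_of_forall_eq_zero (fun x => ?_)
        obtain ⟨x₃, hx₃⟩ := Ext.covariant_sequence_exact₁ X' hS x
          (CotorsionAux.eq_zero_of_extZero
            (CotorsionAux.subsingleton_ext_of_injective X' (Injective.under Z') (i + 2)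
              (by omega)) _) (n₀ := i + 1) (by omega)
        rw [← hx₃, CotorsionAux.eq_zero_of_extZero (ih X' hX' _ hC) x₃, Ext.zero_comp]
    -- hereditary for the pair (Z, Y)
    have hered2 : ∀ i : ℕ, ∀ Z' ∈ Z, ∀ Y' ∈ Y, extZero Z' Y' (i + 1) := by
      intro i
      induction i with
      | zero => exact fun Z' hZ' Y' hY' => (hZY.1 Z').1 hZ' Y' hY'
      | succ i ih =>
        intro Z' hZ' Y' hY'
        set g := Projective.π Z' with hg_def
        set S := ShortComplex.mk (kernel.ι g) g (kernel.condition g) with hS_def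
        have hS : S.ShortExact := { exact := S.exact_of_f_is_kernel (kernelIsKernel g) }
        have hP : Projective.over Z' ∈ Z := (hZY.1 _).2 (fun Y'' _ =>
          CotorsionAux.subsingleton_ext_of_projective _ Y'' 1 one_ne_zero)
        have hK : kernel g ∈ Z := (h23 S hS).2.2 hP hZ'
        refine CotorsionAux.extZero_of_forall_eq_zero (fun x => ?_)
        obtain ⟨x₁, hx₁⟩ := Ext.contravariant_sequence_exact₃ hS Y' x
          (CotorsionAux.eq_zero_of_extZero
            (CotorsionAux.subsingleton_ext_of_projective (Projective.over Z') Y' (i + 2)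
              (by omega)) _) (n₀ := i + 1) (by omega)
        rw [← hx₁, CotorsionAux.eq_zero_of_extZero (ih _ hK Y' hY') x₁, Ext.comp_zero]
    refine ⟨⟨hXZ, fun X' hX' Z' hZ' i hi => ?_⟩, ⟨hZY, fun Z' hZ' Y' hY' i hi => ?_⟩⟩
    · obtain ⟨i', rfl⟩ : ∃ i', i = i' + 1 := ⟨i - 1, by omega⟩
      exact hered1 i' X' hX' Z' hZ'
    · obtain ⟨i', rfl⟩ : ∃ i', i = i' + 1 := ⟨i - 1, by omega⟩
      exact hered2 i' Z' hZ' Y' hY'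
  · rintro ⟨⟨-, hered1⟩, ⟨-, hered2⟩⟩
    constructor
    · -- closed under direct summands
      rintro M N hM ⟨i, r, hir⟩
      refine (hXZ.2 N).2 (fun X' hX' => CotorsionAux.extZero_of_forall_eq_zero (fun x => ?_))
      have h0 : x.comp (Ext.mk₀ i) (add_zero 1) = 0 :=
        CotorsionAux.eq_zero_of_extZero ((hXZ.2 M).1 hM X' hX') _
      have e1 : x = (x.comp (Ext.mk₀ i) (add_zero 1)).comp (Ext.mk₀ r) (add_zero 1) := by
        rw [Ext.comp_assoc_of_second_deg_zero, Ext.mk₀_comp_mk₀, hir, Ext.comp_mk₀_id]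
      rw [e1, h0, Ext.zero_comp]
    · intro S hS
      refine ⟨fun h₁ h₂ => ?_, fun h₁ h₃ => ?_, fun h₂ h₃ => ?_⟩
      · -- X₁, X₂ ∈ Z → X₃ ∈ Z
        refine (hXZ.2 _).2 (fun X' hX' => CotorsionAux.extZero_of_forall_eq_zero (fun x => ?_))
        obtain ⟨x₂, hx₂⟩ := Ext.covariant_sequence_exact₃ X' hS x rfl
          (CotorsionAux.eq_zero_of_extZero (hered1 X' hX' S.X₁ h₁ 2 (by omega)) _)
        rw [← hx₂, CotorsionAux.eq_zero_of_extZero ((hXZ.2 S.X₂).1 h₂ X' hX') x₂, Ext.zero_comp]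
      · -- X₁, X₃ ∈ Z → X₂ ∈ Z
        refine (hXZ.2 _).2 (fun X' hX' => CotorsionAux.extZero_of_forall_eq_zero (fun x => ?_))
        obtain ⟨x₁, hx₁⟩ := Ext.covariant_sequence_exact₂ X' hS x
          (CotorsionAux.eq_zero_of_extZero ((hXZ.2 S.X₃).1 h₃ X' hX') _)
        rw [← hx₁, CotorsionAux.eq_zero_of_extZero ((hXZ.2 S.X₁).1 h₁ X' hX') x₁, Ext.zero_comp]
      · -- X₂, X₃ ∈ Z → X₁ ∈ Z
        refine (hZY.1 _).2 (fun Y' hY' => CotorsionAux.extZero_of_forall_eq_zero (fun x => ?_))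
        obtain ⟨x₂, hx₂⟩ := Ext.contravariant_sequence_exact₁ hS Y' x rfl
          (CotorsionAux.eq_zero_of_extZero (hered2 S.X₃ h₃ Y' hY' 2 (by omega)) _)
        rw [← hx₂, CotorsionAux.eq_zero_of_extZero ((hZY.1 S.X₂).1 h₂ Y' hY') x₂, Ext.comp_zero]
end

section
/- Let (𝒳, 𝒵, 𝒴) be a hereditary cotorsion triple in 𝒜. Then an object of 𝒜 belongs to both 𝒳 and 𝒵 if and only if it is a projective object, i.e., 𝒳 ∩ 𝒵 = 𝒫, the class of projective objects of 𝒜. -/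
open CategoryTheory Abelian Limits ZeroObject

universe v u

variable {A : Type u} [Category.{v} A] [Abelian A]
  [EnoughProjectives A] [EnoughInjectives A]

/-!
### Auxiliary results

We first establish the key vanishing result: if `P` is projective, then
`Ext P N n` is trivial for every `N` and every `n ≥ 1`. This is proved by
computing morphisms in the derived category using a calculus of left
fractions on the homotopy category, after observing that any chain map from
the single complex of a projective object into a complex which is exact in
degree `0` is null-homotopic.
-/

section AuxiliaryLemmas

set_option linter.unusedSectionVars false

open HomologicalComplex

universe w

/-- A chain map from the single complex of a projective object into a
complex with vanishing homology in degree `0` is null-homotopic. -/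
private lemma aux_quotient_map_eq_zero {P : A} (hP : Projective P)
    (L : CochainComplex A ℤ) (hL : IsZero (L.homology 0))
    (f : (HomologicalComplex.single A (ComplexShape.up ℤ) 0).obj P ⟶ L) :
    (HomotopyCategory.quotient A (ComplexShape.up ℤ)).map f = 0 := by
  haveI := hP
  have hex : (L.sc' (-1) 0 1).Exact := by
    rw [← L.exactAt_iff' (-1) 0 1 (by simp) (by simp), L.exactAt_iff_isZero_homology]
    exact hL
  have hg : ((HomologicalComplex.singleObjXSelf (ComplexShape.up ℤ) 0 P).inv ≫ f.f 0) ≫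
      (L.sc' (-1) 0 1).g = 0 := by
    show _ ≫ L.d 0 1 = 0
    rw [Category.assoc, f.comm 0 1]
    simp
  let l : P ⟶ L.X (-1) := hex.liftFromProjective _ hg
  have hl : l ≫ L.d (-1) 0 =
      (HomologicalComplex.singleObjXSelf (ComplexShape.up ℤ) 0 P).inv ≫ f.f 0 :=
    hex.liftFromProjective_comp _ hg
  let homF : ∀ i j, ((HomologicalComplex.single A (ComplexShape.up ℤ) 0).obj P).X i ⟶ L.X j :=
    fun i j =>
      if h : i = 0 ∧ j = -1 then
        (((HomologicalComplex.single A (ComplexShape.up ℤ) 0).obj P).XIsoOfEq h.1).hom ≫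
          (HomologicalComplex.singleObjXSelf (ComplexShape.up ℤ) 0 P).hom ≫ l ≫
          (L.XIsoOfEq h.2).inv
      else 0
  have H : Homotopy f 0 := by
    refine ⟨homF, ?_, ?_⟩
    · intro i j hij
      exact dif_neg (by rintro ⟨rfl, rfl⟩; exact hij (by simp))
    · intro i
      by_cases hi : i = 0
      · subst hi
        rw [dNext_eq _ (show (ComplexShape.up ℤ).Rel 0 1 by simp),
          prevD_eq _ (show (ComplexShape.up ℤ).Rel (-1) 0 by simp)]
        have e2 : homF 0 (-1) =
            (HomologicalComplex.singleObjXSelf (ComplexShape.up ℤ) 0 P).hom ≫ l := by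
          show (if h : (0:ℤ) = 0 ∧ (-1:ℤ) = -1 then
              ((((HomologicalComplex.single A (ComplexShape.up ℤ) 0).obj P)).XIsoOfEq h.1).hom ≫
                (HomologicalComplex.singleObjXSelf (ComplexShape.up ℤ) 0 P).hom ≫ l ≫
                (L.XIsoOfEq h.2).inv
            else 0) = _
          rw [dif_pos ⟨rfl, rfl⟩]
          simp [HomologicalComplex.XIsoOfEq, eqToIso]
        rw [e2]
        simp [hl]
      · exact (HomologicalComplex.isZero_single_obj_X (ComplexShape.up ℤ) 0 P i hi).eq_of_src _ _
  rw [HomotopyCategory.eq_of_homotopy f 0 H, Functor.map_zero]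

/-- Any morphism in the derived category from the single complex of a
projective object into (the image of) an object of the homotopy category with
vanishing homology in degree `0` is zero. -/
private lemma aux_qh_hom_eq_zero [HasDerivedCategory.{w} A] {P : A} (hP : Projective P)
    (Y : HomotopyCategory A (ComplexShape.up ℤ))
    (hY : IsZero ((HomotopyCategory.homologyFunctor A (ComplexShape.up ℤ) 0).obj Y))
    (φ : DerivedCategory.Qh.obj ((HomotopyCategory.quotient A (ComplexShape.up ℤ)).obj
      ((HomologicalComplex.single A (ComplexShape.up ℤ) 0).obj P)) ⟶ DerivedCategory.Qh.obj Y) :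
    φ = 0 := by
  haveI : (HomotopyCategory.quasiIso A (ComplexShape.up ℤ)).HasLeftCalculusOfFractions := by
    rw [HomotopyCategory.quasiIso_eq_subcategoryAcyclic_W]
    infer_instance
  obtain ⟨z, hz⟩ := Localization.exists_leftFraction DerivedCategory.Qh
    (HomotopyCategory.quasiIso A (ComplexShape.up ℤ)) φ
  obtain ⟨Y'', g, s, hs, rfl⟩ := z.cases
  haveI hinv : IsIso (DerivedCategory.Qh.map s) :=
    Localization.inverts DerivedCategory.Qh (HomotopyCategory.quasiIso A (ComplexShape.up ℤ)) s hs
  have hY'' : IsZero ((HomotopyCategory.homologyFunctor A (ComplexShape.up ℤ) 0).obj Y'') := by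
    haveI : IsIso ((HomotopyCategory.homologyFunctor A (ComplexShape.up ℤ) 0).map s) := hs 0
    exact IsZero.of_iso hY
      (asIso ((HomotopyCategory.homologyFunctor A (ComplexShape.up ℤ) 0).map s)).symm
  obtain ⟨g', rfl⟩ := (HomotopyCategory.quotient A (ComplexShape.up ℤ)).map_surjective g
  have hY''2 : IsZero (Y''.as.homology 0) :=
    IsZero.of_iso hY''
      ((HomotopyCategory.homologyFunctorFactors A (ComplexShape.up ℤ) 0).app Y''.as).symm
  have hg0 : (HomotopyCategory.quotient A (ComplexShape.up ℤ)).map g' = 0 :=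
    aux_quotient_map_eq_zero hP Y''.as hY''2 g'
  rw [hz, ← cancel_mono (DerivedCategory.Qh.map s),
    MorphismProperty.LeftFraction.map_comp_map_s, zero_comp, hg0]
  exact Functor.map_zero _ _ _

/-- If `P` is projective, then `Ext P N n` is trivial for all `n ≥ 1`. -/
private lemma aux_ext_subsingleton {P : A} (hP : Projective P) (N : A) (n : ℕ) (hn : 1 ≤ n) :
    Subsingleton (Abelian.Ext P N n) := by
  letI := HasDerivedCategory.standard A
  refine subsingleton_of_forall_eq 0 (fun α => ?_)
  refine Abelian.Ext.ext ?_
  rw [Abelian.Ext.zero_hom]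
  have h1 : IsZero
      ((((HomologicalComplex.single A (ComplexShape.up ℤ) 0).obj N)⟦(n:ℤ)⟧).homology 0) := by
    rw [← HomologicalComplex.exactAt_iff_isZero_homology]
    apply ShortComplex.exact_of_isZero_X₂
    refine IsZero.of_iso ?_
      (CochainComplex.shiftFunctorObjXIso
        ((HomologicalComplex.single A (ComplexShape.up ℤ) 0).obj N) (n:ℤ) 0 ((0:ℤ)+(n:ℤ)) rfl)
    refine HomologicalComplex.isZero_single_obj_X (ComplexShape.up ℤ) 0 N _ ?_
    have : (1:ℤ) ≤ (n:ℤ) := by exact_mod_cast hn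
    omega
  have hTz : IsZero ((HomotopyCategory.homologyFunctor A (ComplexShape.up ℤ) 0).obj
      (((HomotopyCategory.quotient A (ComplexShape.up ℤ)).obj
        ((HomologicalComplex.single A (ComplexShape.up ℤ) 0).obj N))⟦(n:ℤ)⟧)) := by
    refine IsZero.of_iso (IsZero.of_iso h1
        ((HomotopyCategory.homologyFunctorFactors A (ComplexShape.up ℤ) 0).app _)) ?_
    exact (HomotopyCategory.homologyFunctor A (ComplexShape.up ℤ) 0).mapIso
      (((HomotopyCategory.quotient A (ComplexShape.up ℤ)).commShiftIso (n:ℤ)).app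
        ((HomologicalComplex.single A (ComplexShape.up ℤ) 0).obj N)).symm
  have hφ : α.hom ≫ ((DerivedCategory.Qh.commShiftIso (n:ℤ)).app
      ((HomotopyCategory.quotient A (ComplexShape.up ℤ)).obj
        ((HomologicalComplex.single A (ComplexShape.up ℤ) 0).obj N))).inv = 0 :=
    aux_qh_hom_eq_zero hP _ hTz _
  refine (cancel_mono (((DerivedCategory.Qh.commShiftIso (n:ℤ)).app
      ((HomotopyCategory.quotient A (ComplexShape.up ℤ)).obj
        ((HomologicalComplex.single A (ComplexShape.up ℤ) 0).obj N))).inv)).1 ?_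
  exact hφ.trans zero_comp.symm

/-- The compatibility of the single functor in degree `0` with the homology
functor in degree `0` on the derived category. -/
private noncomputable def auxSingleHomologyIso [HasDerivedCategory.{w} A] :
    DerivedCategory.singleFunctor A 0 ⋙ DerivedCategory.homologyFunctor A 0 ≅ 𝟭 A :=
  Functor.isoWhiskerRight ((SingleFunctors.evaluation _ _ 0).mapIso
      (DerivedCategory.singleFunctorsPostcompQIso A)) (DerivedCategory.homologyFunctor A 0) ≪≫
    Functor.associator _ _ _ ≪≫
    Functor.isoWhiskerLeft (CochainComplex.singleFunctor A 0)
      (DerivedCategory.homologyFunctorFactors A 0) ≪≫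
    HomologicalComplex.homologyFunctorSingleIso A (ComplexShape.up ℤ) 0

/-- An element of `Ext M P 0` which is inverse to `g : P ⟶ M` yields a section of `g`. -/
private lemma aux_exists_section {M P : A} (g : P ⟶ M)
    (x₂ : Abelian.Ext M P 0)
    (hx₂ : x₂.comp (Abelian.Ext.mk₀ g) (add_zero 0) = Abelian.Ext.mk₀ (𝟙 M)) :
    ∃ s : M ⟶ P, s ≫ g = 𝟙 M := by
  letI := HasDerivedCategory.standard A
  have h0 : ((0:ℕ):ℤ) = 0 := by simp
  set F := DerivedCategory.singleFunctor A 0 with hF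
  set σ : F.obj M ⟶ F.obj P :=
    x₂.hom ≫ (shiftFunctorZero' (DerivedCategory A) ((0:ℕ):ℤ) h0).hom.app (F.obj P) with hσdef
  have h1 : x₂.hom.comp (ShiftedHom.mk₀ ((0:ℕ):ℤ) h0 (F.map g)) (by omega) =
      ShiftedHom.mk₀ ((0:ℕ):ℤ) h0 (F.map (𝟙 M)) := by
    have := congrArg Abelian.Ext.hom hx₂
    rw [Abelian.Ext.comp_hom, Abelian.Ext.mk₀_hom, Abelian.Ext.mk₀_hom] at this
    exact this
  have h3 : x₂.hom ≫ (F.map g)⟦((0:ℕ):ℤ)⟧' = ShiftedHom.mk₀ ((0:ℕ):ℤ) h0 (F.map (𝟙 M)) :=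
    (ShiftedHom.comp_mk₀ x₂.hom ((0:ℕ):ℤ) h0 (F.map g)).symm.trans h1
  have hn : (shiftFunctorZero' (DerivedCategory A) ((0:ℕ):ℤ) h0).hom.app (F.obj P) ≫ F.map g =
      (F.map g)⟦((0:ℕ):ℤ)⟧' ≫
        (shiftFunctorZero' (DerivedCategory A) ((0:ℕ):ℤ) h0).hom.app (F.obj M) := by
    simpa using ((shiftFunctorZero' (DerivedCategory A) ((0:ℕ):ℤ) h0).hom.naturality
      (F.map g)).symm
  have hσ : σ ≫ F.map g = 𝟙 (F.obj M) := by
    rw [hσdef, Category.assoc, hn, ← Category.assoc, h3]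
    simp [ShiftedHom.mk₀]
  let ν := auxSingleHomologyIso (A := A)
  refine ⟨ν.inv.app M ≫ (DerivedCategory.homologyFunctor A 0).map σ ≫ ν.hom.app P, ?_⟩
  have hnat : ν.hom.app P ≫ g =
      (DerivedCategory.homologyFunctor A 0).map (F.map g) ≫ ν.hom.app M := by
    simpa using (ν.hom.naturality g).symm
  rw [Category.assoc, Category.assoc, hnat, ← Category.assoc
    ((DerivedCategory.homologyFunctor A 0).map σ),
    ← Functor.map_comp, hσ]
  simp

/-- A retract of a projective object is projective. -/
private lemma aux_projective_of_retract {M P : A} (hP : Projective P)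
    (s : M ⟶ P) (g : P ⟶ M) (hs : s ≫ g = 𝟙 M) : Projective M := by
  haveI := hP
  constructor
  intro E X' f e he
  obtain ⟨f', hf'⟩ := Projective.factors (g ≫ f) e
  exact ⟨s ≫ f', by rw [Category.assoc, hf', ← Category.assoc, hs, Category.id_comp]⟩

end AuxiliaryLemmas

/-- Let `(𝒳, 𝒵, 𝒴)` be a hereditary cotorsion triple in `𝒜`. Then
`𝒳 ∩ 𝒵 = 𝒫`, the class of projective objects of `𝒜`. -/
theorem inter_eq_projectives (X Z Y : Set A) (h : IsHereditaryCotorsionTriple X Z Y) :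
    X ∩ Z = {M : A | Projective M} := by
  obtain ⟨⟨⟨hX1, hX2⟩, hXZher⟩, ⟨⟨hZ1, hZ2⟩, hZYher⟩⟩ := h
  ext M
  simp only [Set.mem_inter_iff, Set.mem_setOf_eq]
  constructor
  · rintro ⟨hMX, hMZ⟩
    -- choose a short exact sequence `0 ⟶ K ⟶ P ⟶ M ⟶ 0` with `P` projective
    set π : Projective.over M ⟶ M := Projective.π M with hπ
    set S : ShortComplex A := ShortComplex.mk (kernel.ι π) π (kernel.condition π) with hSdef
    have hS : S.ShortExact := ShortComplex.ShortExact.mk'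
      (S.exact_of_f_is_kernel (kernelIsKernel π)) inferInstance inferInstance
    have hPproj : Projective (Projective.over M) := inferInstance
    -- the kernel `K` belongs to `Z`, using the long exact sequence and heredity of `(Z, Y)`
    have hKZ : kernel π ∈ Z := by
      refine (hZ1 (kernel π)).2 (fun Y' hY' => ?_)
      refine subsingleton_of_forall_eq 0 (fun x₁ => ?_)
      haveI hsub2 : Subsingleton (Abelian.Ext S.X₃ Y' 2) := hZYher M hMZ Y' hY' 2 (by norm_num)
      obtain ⟨x₂, hx₂⟩ := Abelian.Ext.contravariant_sequence_exact₁ hS Y' x₁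
        (by norm_num : 1 + 1 = 2) (Subsingleton.elim _ _)
      haveI : Subsingleton (Abelian.Ext S.X₂ Y' 1) := aux_ext_subsingleton hPproj Y' 1 le_rfl
      rw [← hx₂, Subsingleton.elim x₂ 0]
      simp
    -- hence `Ext¹(M, K)` vanishes since `M ∈ X` and `K ∈ Z`
    haveI hMK : Subsingleton (Abelian.Ext M S.X₁ 1) := (hX1 M).1 hMX (kernel π) hKZ
    -- therefore the sequence splits, and `M` is a retract of `P`
    obtain ⟨x₂, hx₂⟩ := Abelian.Ext.covariant_sequence_exact₃ M hS (Abelian.Ext.mk₀ (𝟙 M))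
      (zero_add 1) (Subsingleton.elim _ _)
    obtain ⟨s, hs⟩ := aux_exists_section π x₂ hx₂
    exact aux_projective_of_retract hPproj s π hs
  · intro hM
    exact ⟨(hX1 M).2 (fun Z' _ => aux_ext_subsingleton hM Z' 1 le_rfl),
      (hZ1 M).2 (fun Y' _ => aux_ext_subsingleton hM Y' 1 le_rfl)⟩
end

section
/- Let (𝒳, 𝒵, 𝒴) be a complete hereditary cotorsion triple in 𝒜 and let M be an object of 𝒜. Then M ∈ 𝒴 if and only if for every object N, every epimorphism f : X → N that is a right 𝒳-approximation of N (X ∈ 𝒳 and composition with f maps Hom(X', X) onto Hom(X', N) for every X' ∈ 𝒳), and every morphism α : Ker(f) → M, there exists β : X → M with β ∘ g = α, where g : Ker(f) → X is the kernel inclusion. -/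
open CategoryTheory Abelian Limits ZeroObject

universe v u

variable {A : Type u} [Category.{v} A] [Abelian A]
  [EnoughProjectives A] [EnoughInjectives A]

/-! ### Auxiliary material: extracting morphisms from degree-zero Ext classes -/

namespace CotorsionAux

universe w' w v' u'

variable {B : Type u'} [Category.{v'} B] [Abelian B]

section Bridge

variable [HasExt.{w} B] [HasDerivedCategory.{w'} B]

/-- The derived single functor is isomorphic to the composition through `Q`. -/
noncomputable def singleQIso : DerivedCategory.singleFunctor B 0 ≅
    CochainComplex.singleFunctor B 0 ⋙ DerivedCategory.Q where
  hom := (DerivedCategory.singleFunctorsPostcompQIso B).hom.hom 0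
  inv := (DerivedCategory.singleFunctorsPostcompQIso B).inv.hom 0
  hom_inv_id := SingleFunctors.hom_inv_id_hom _ 0
  inv_hom_id := SingleFunctors.inv_hom_id_hom _ 0

/-- The homology functor in degree 0 on the derived category. -/
noncomputable def H0 : DerivedCategory B ⥤ B :=
  HomologicalComplexUpToQuasiIso.homologyFunctor B (ComplexShape.up ℤ) 0

/-- `H⁰(X[0]) ≅ X`, naturally. -/
noncomputable def νIso : DerivedCategory.singleFunctor B 0 ⋙ H0 ≅ 𝟭 B :=
  Functor.isoWhiskerRight (singleQIso (B := B)) H0 ≪≫ Functor.associator _ _ _ ≪≫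
    Functor.isoWhiskerLeft (CochainComplex.singleFunctor B 0)
      (HomologicalComplexUpToQuasiIso.homologyFunctorFactors B (ComplexShape.up ℤ) 0) ≪≫
    HomologicalComplex.homologyFunctorSingleIso B (ComplexShape.up ℤ) 0

/-- Morphism underlying a `ShiftedHom` of degree `(0 : ℕ)`. -/
noncomputable def unshift {X Y : DerivedCategory B} (x : ShiftedHom X Y ((0 : ℕ) : ℤ)) :
    X ⟶ Y :=
  x ≫ (shiftFunctorZero' (DerivedCategory B) ((0 : ℕ) : ℤ) Nat.cast_zero).hom.app Y

lemma unshift_mk₀ {X Y : DerivedCategory B} (pf : ((0 : ℕ) : ℤ) = 0) (g : X ⟶ Y) :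
    unshift (ShiftedHom.mk₀ _ pf g) = g := by
  simp [unshift, ShiftedHom.mk₀]

lemma unshift_comp_mk₀ {X Y Z : DerivedCategory B}
    (x : ShiftedHom X Y ((0 : ℕ) : ℤ)) (pf : ((0 : ℕ) : ℤ) = 0) (g : Y ⟶ Z)
    (hpf : ((0 : ℕ) : ℤ) + ((0 : ℕ) : ℤ) = ((0 : ℕ) : ℤ)) :
    unshift (x.comp (ShiftedHom.mk₀ _ pf g) hpf) = unshift x ≫ g := by
  rw [ShiftedHom.comp_mk₀]
  dsimp [unshift]
  rw [Category.assoc, NatTrans.naturality]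
  simp

lemma unshift_mk₀_comp {X Y Z : DerivedCategory B}
    (pf : ((0 : ℕ) : ℤ) = 0) (f : X ⟶ Y) (x : ShiftedHom Y Z ((0 : ℕ) : ℤ))
    (hpf : ((0 : ℕ) : ℤ) + ((0 : ℕ) : ℤ) = ((0 : ℕ) : ℤ)) :
    unshift ((ShiftedHom.mk₀ _ pf f).comp x hpf) = f ≫ unshift x := by
  rw [ShiftedHom.mk₀_comp]
  dsimp [unshift]
  rw [Category.assoc]

/-- The morphism attached to a degree-zero Ext class. -/
noncomputable def ext0ToHom {X Y : B} (x : Ext X Y 0) : X ⟶ Y :=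
  (νIso (B := B)).inv.app X ≫ H0.map (unshift x.hom) ≫ (νIso (B := B)).hom.app Y

lemma ext0ToHom_single_map {X Y : B} (f : X ⟶ Y) :
    (νIso (B := B)).inv.app X ≫ H0.map ((DerivedCategory.singleFunctor B 0).map f) ≫
      (νIso (B := B)).hom.app Y = f := by
  have h := (νIso (B := B)).hom.naturality f
  dsimp only [Functor.comp_map, Functor.id_map] at h
  rw [h, ← Category.assoc, Iso.inv_hom_id_app]
  simp

lemma ext0ToHom_mk₀ {X Y : B} (f : X ⟶ Y) : ext0ToHom (Ext.mk₀ f) = f := by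
  dsimp only [ext0ToHom]
  rw [Ext.mk₀_hom, unshift_mk₀]
  exact ext0ToHom_single_map f

lemma ext0ToHom_comp_mk₀ {X Y Z : B} (x : Ext X Y 0) (g : Y ⟶ Z) :
    ext0ToHom (x.comp (Ext.mk₀ g) (add_zero 0)) = ext0ToHom x ≫ g := by
  dsimp only [ext0ToHom]
  rw [Ext.comp_hom, Ext.mk₀_hom, unshift_comp_mk₀, Functor.map_comp]
  have h := (νIso (B := B)).hom.naturality g
  dsimp only [Functor.comp_map, Functor.id_map] at h
  simp only [Category.assoc]
  rw [h]

lemma ext0ToHom_mk₀_comp {X Y Z : B} (f : X ⟶ Y) (x : Ext Y Z 0) :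
    ext0ToHom ((Ext.mk₀ f).comp x (zero_add 0)) = f ≫ ext0ToHom x := by
  dsimp only [ext0ToHom]
  rw [Ext.comp_hom, Ext.mk₀_hom, unshift_mk₀_comp, Functor.map_comp]
  have h2 : (νIso (B := B)).inv.app X ≫ H0.map ((DerivedCategory.singleFunctor B 0).map f)
      = f ≫ (νIso (B := B)).inv.app Y := by
    have h := (νIso (B := B)).inv.naturality f
    dsimp only [Functor.comp_map, Functor.id_map] at h
    exact h.symm
  simp only [← Category.assoc]
  rw [h2]

end Bridge

section LES

variable [HasExt.{w} B]

/-- If `Ext¹(X₃, M) = 0` then any map `X₁ ⟶ M` extends along `X₁ ⟶ X₂`. -/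
lemma extend_along {S : ShortComplex B} (hS : S.ShortExact) {M : B}
    (h1 : Subsingleton (Ext S.X₃ M 1)) (τ : S.X₁ ⟶ M) :
    ∃ ψ : S.X₂ ⟶ M, S.f ≫ ψ = τ := by
  letI := HasDerivedCategory.standard B
  obtain ⟨x₂, hx₂⟩ := Ext.contravariant_sequence_exact₁ hS M (Ext.mk₀ τ)
    (show 1 + 0 = 1 from rfl) (Subsingleton.elim _ _)
  refine ⟨ext0ToHom x₂, ?_⟩
  have := congrArg ext0ToHom hx₂
  rwa [ext0ToHom_mk₀_comp, ext0ToHom_mk₀] at this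

/-- If `Ext¹(W, X₁) = 0` then any map `W ⟶ X₃` lifts along `X₂ ⟶ X₃`. -/
lemma lift_along {S : ShortComplex B} (hS : S.ShortExact) {W : B}
    (h1 : Subsingleton (Ext W S.X₁ 1)) (γ : W ⟶ S.X₃) :
    ∃ γ' : W ⟶ S.X₂, γ' ≫ S.g = γ := by
  letI := HasDerivedCategory.standard B
  obtain ⟨x₂, hx₂⟩ := Ext.covariant_sequence_exact₃ W hS (Ext.mk₀ γ)
    (show 0 + 1 = 1 from rfl) (Subsingleton.elim _ _)
  refine ⟨ext0ToHom x₂, ?_⟩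
  have := congrArg ext0ToHom hx₂
  rwa [ext0ToHom_comp_mk₀, ext0ToHom_mk₀] at this

lemma ext1_surj {S : ShortComplex B} (hS : S.ShortExact) {W : B}
    (h2 : Subsingleton (Ext W S.X₁ 2)) (ξ : Ext W S.X₃ 1) :
    ∃ θ : Ext W S.X₂ 1, θ.comp (Ext.mk₀ S.g) (add_zero 1) = ξ :=
  Ext.covariant_sequence_exact₃ W hS ξ (show 1 + 1 = 2 from rfl) (Subsingleton.elim _ _)

lemma ext1_middle_vanish {S : ShortComplex B} (hS : S.ShortExact) {W : B}
    (hA : Subsingleton (Ext W S.X₁ 1)) (hC : Subsingleton (Ext W S.X₃ 1)) :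
    Subsingleton (Ext W S.X₂ 1) := by
  have hz : ∀ θ : Ext W S.X₂ 1, θ = 0 := by
    intro θ
    obtain ⟨x₁, hx₁⟩ := Ext.covariant_sequence_exact₂ W hS θ (Subsingleton.elim _ _)
    rw [← hx₁, Subsingleton.elim x₁ 0, Ext.zero_comp]
  exact ⟨fun a b => by rw [hz a, hz b]⟩

lemma ext1_right_vanish {S : ShortComplex B} (hS : S.ShortExact) {W : B}
    (hB : Subsingleton (Ext W S.X₂ 1)) (hA2 : Subsingleton (Ext W S.X₁ 2)) :
    Subsingleton (Ext W S.X₃ 1) := by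
  have hz : ∀ ξ : Ext W S.X₃ 1, ξ = 0 := by
    intro ξ
    obtain ⟨θ, hθ⟩ := ext1_surj hS hA2 ξ
    rw [← hθ, Subsingleton.elim θ 0, Ext.zero_comp]
  exact ⟨fun a b => by rw [hz a, hz b]⟩

end LES

end CotorsionAux

open CotorsionAux

/-- Let `(𝒳, 𝒵, 𝒴)` be a complete hereditary cotorsion triple and `M` an object.
Then `M ∈ 𝒴` if and only if, for every epic right `𝒳`-approximation `f : X ⟶ N`,
every morphism `α : Ker f ⟶ M` extends along the kernel inclusion. -/
theorem mem_right_iff_extends (X Z Y : Set A)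
    (h : IsCompleteHereditaryCotorsionTriple X Z Y) (M : A) :
    M ∈ Y ↔
      ∀ (X₀ N : A) (f : X₀ ⟶ N), Epi f → X₀ ∈ X →
        (∀ X' ∈ X, ∀ u : X' ⟶ N, ∃ k : X' ⟶ X₀, k ≫ f = u) →
        ∀ α : kernel f ⟶ M, ∃ β : X₀ ⟶ M, kernel.ι f ≫ β = α := by
  obtain ⟨hcXZ, hcZY, hhXZ, hhZY⟩ := h
  have pairXZ : IsCotorsionPair X Z := hcXZ.1
  have pairZY : IsCotorsionPair Z Y := hcZY.1
  constructor
  · -- forward direction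
    intro hM X₀ N f hf hX₀ happrox α
    -- special sequence 0 → Z₆ → X₆ → N → 0
    obtain ⟨Z₆, X₆, g₆, f₆, w₆, hS₆, hX₆, hZ₆⟩ := (hcXZ.2 N).1
    have := hS₆.mono_f
    have := hS₆.epi_g
    -- d : X₆ ⟶ X₀ lifting f₆ through f
    obtain ⟨d, hd⟩ := happrox X₆ hX₆ f₆
    -- d' : X₀ ⟶ X₆ lifting f through f₆
    obtain ⟨d', hd'0⟩ := lift_along hS₆ ((pairXZ.1 X₀).mp hX₀ Z₆ hZ₆) f
    have hd' : d' ≫ f₆ = f := hd'0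
    -- the pullback R of f and f₆
    let p : pullback f f₆ ⟶ X₀ := pullback.fst f f₆
    let p₆ : pullback f f₆ ⟶ X₆ := pullback.snd f f₆
    have cond : p ≫ f = p₆ ≫ f₆ := pullback.condition
    let s : X₀ ⟶ pullback f f₆ := pullback.lift (𝟙 X₀) d' (by rw [Category.id_comp, hd'])
    have hsp : s ≫ p = 𝟙 X₀ := pullback.lift_fst _ _ _
    have hsp₆ : s ≫ p₆ = d' := pullback.lift_snd _ _ _
    let s₆ : X₆ ⟶ pullback f f₆ := pullback.lift d (𝟙 X₆) (by rw [Category.id_comp, hd])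
    have hs₆p : s₆ ≫ p = d := pullback.lift_fst _ _ _
    have hs₆p₆ : s₆ ≫ p₆ = 𝟙 X₆ := pullback.lift_snd _ _ _
    let iK : kernel f ⟶ pullback f f₆ :=
      pullback.lift (kernel.ι f) 0 (by rw [kernel.condition, zero_comp])
    have hiKp : iK ≫ p = kernel.ι f := pullback.lift_fst _ _ _
    have hiKp₆ : iK ≫ p₆ = 0 := pullback.lift_snd _ _ _
    let j : Z₆ ⟶ pullback f f₆ := pullback.lift 0 g₆ (by rw [zero_comp, w₆])
    have hjp : j ≫ p = 0 := pullback.lift_fst _ _ _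
    have hjp₆ : j ≫ p₆ = g₆ := pullback.lift_snd _ _ _
    -- retraction of iK
    let rK : pullback f f₆ ⟶ kernel f := kernel.lift f ((𝟙 _ - p₆ ≫ s₆) ≫ p) (by
      simp only [Preadditive.sub_comp, Category.id_comp, Category.assoc]
      rw [reassoc_of% hs₆p, hd, ← pullback.condition, sub_self])
    have hrKι : rK ≫ kernel.ι f = (𝟙 _ - p₆ ≫ s₆) ≫ p := kernel.lift_ι _ _ _
    have hiKrK : iK ≫ rK = 𝟙 (kernel f) := by
      rw [← cancel_mono (kernel.ι f), Category.assoc, hrKι, Category.id_comp]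
      simp only [Preadditive.sub_comp, Preadditive.comp_sub, Category.id_comp,
        Category.assoc]
      rw [hiKp, reassoc_of% hiKp₆, zero_comp, sub_zero]
    -- the map ρZ
    have htp : (𝟙 (pullback f f₆) - p ≫ s) ≫ p = 0 := by
      simp only [Preadditive.sub_comp, Category.id_comp, Category.assoc]
      rw [hsp, Category.comp_id, sub_self]
    let ρZ : pullback f f₆ ⟶ Z₆ := hS₆.exact.lift ((𝟙 _ - p ≫ s) ≫ p₆) (by
      rw [Category.assoc, ← pullback.condition, ← Category.assoc, htp, zero_comp])
    have hρZg₆ : ρZ ≫ g₆ = (𝟙 _ - p ≫ s) ≫ p₆ := hS₆.exact.lift_f _ _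
    have hρZj : ρZ ≫ j = 𝟙 _ - p ≫ s := by
      apply pullback.hom_ext
      · rw [Category.assoc, hjp, comp_zero, htp]
      · rw [Category.assoc, hjp₆, hρZg₆]
    have hps : p ≫ s = 𝟙 _ - ρZ ≫ j := by rw [hρZj, sub_sub_cancel]
    -- the map to extend
    -- embed X₆ into a Z-object
    obtain ⟨Zc, Xc, m, πc, wc, hSc, hXc, hZc⟩ := (hcXZ.2 X₆).2
    have := hSc.mono_f
    have hmono : Mono (g₆ ≫ m) := mono_comp _ _
    let S' : ShortComplex A := ShortComplex.mk (g₆ ≫ m) (cokernel.π (g₆ ≫ m))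
      (cokernel.condition _)
    have hS' : S'.ShortExact :=
      { exact := ShortComplex.exact_of_g_is_cokernel _ (cokernelIsCokernel _) }
    have hC'Z : cokernel (g₆ ≫ m) ∈ Z := by
      refine (pairXZ.2 _).mpr ?_
      intro X' hX'
      exact ext1_right_vanish hS' ((pairXZ.1 X').mp hX' Zc hZc)
        (hhXZ.2 X' hX' Z₆ hZ₆ 2 (by norm_num))
    have hC'M : Subsingleton (Ext (cokernel (g₆ ≫ m)) M 1) := (pairZY.2 M).mp hM _ hC'Z
    obtain ⟨ψc, hψc0⟩ := extend_along hS' hC'M (j ≫ rK ≫ α)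
    have hψc : (g₆ ≫ m) ≫ ψc = j ≫ rK ≫ α := hψc0
    have hT : g₆ ≫ m ≫ ψc = j ≫ rK ≫ α := by rw [← Category.assoc]; exact hψc
    -- the extension
    refine ⟨s ≫ (rK ≫ α) - s ≫ p₆ ≫ (m ≫ ψc), ?_⟩
    have hkι : kernel.ι f = iK ≫ p := hiKp.symm
    rw [hkι]
    have expand : iK ≫ p ≫ s ≫ (rK ≫ α) - iK ≫ p ≫ s ≫ p₆ ≫ (m ≫ ψc)
        = iK ≫ (p ≫ s) ≫ (rK ≫ α) - iK ≫ (p ≫ s) ≫ (p₆ ≫ m ≫ ψc) := by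
      simp only [Category.assoc]
    rw [Preadditive.comp_sub]
    simp only [Category.assoc]
    rw [show iK ≫ p ≫ s ≫ rK ≫ α - iK ≫ p ≫ s ≫ p₆ ≫ m ≫ ψc
        = iK ≫ (p ≫ s) ≫ (rK ≫ α) - iK ≫ (p ≫ s) ≫ (p₆ ≫ m ≫ ψc) by
      simp only [Category.assoc]]
    rw [hps]
    simp only [Preadditive.sub_comp, Preadditive.comp_sub, Category.id_comp, Category.assoc]
    rw [reassoc_of% hiKrK, reassoc_of% hiKp₆, zero_comp, reassoc_of% hjp₆, hT]
    abel
  · -- converse direction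
    intro H
    refine (pairZY.2 M).mpr ?_
    intro Z₀ hZ₀
    obtain ⟨Y₀, Z₃, w, v, w₃, hS₃, hZ₃, hY₀⟩ := (hcZY.2 M).1
    obtain ⟨Y₂, Z₂, e, c, w₂, hS₂, hZ₂, hY₂⟩ := (hcZY.2 Z₃).2
    obtain ⟨Z₅, X₅, ι₅, σ, w₅, hS₅, hX₅, hZ₅⟩ := (hcXZ.2 Y₂).1
    have := hS₂.mono_f
    have := hS₂.epi_g
    have := hS₅.mono_f
    have := hS₅.epi_g
    have hEpic : Epi c := hS₂.epi_g
    have hEpiσ : Epi σ := hS₅.epi_g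
    set q : X₅ ⟶ Z₂ := σ ≫ c with hqdef
    have hq : Epi q := epi_comp σ c
    -- the corestriction cK : kernel q ⟶ Z₃
    have hcond : (kernel.ι q ≫ σ) ≫ c = 0 := by
      rw [Category.assoc, ← hqdef, kernel.condition]
    let cK : kernel q ⟶ Z₃ := hS₂.exact.lift (kernel.ι q ≫ σ) hcond
    have hcK : cK ≫ e = kernel.ι q ≫ σ := hS₂.exact.lift_f _ _
    -- j₅ : Z₅ ⟶ kernel q
    let j₅ : Z₅ ⟶ kernel q := kernel.lift q ι₅ (by rw [hqdef, ← Category.assoc, w₅, zero_comp])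
    have hj₅ : j₅ ≫ kernel.ι q = ι₅ := kernel.lift_ι _ _ _
    have hj₅cK : j₅ ≫ cK = 0 := by
      rw [← cancel_mono e, Category.assoc, hcK, reassoc_of% hj₅, w₅, zero_comp]
    have hmonoj₅ : Mono j₅ := by
      have : Mono (j₅ ≫ kernel.ι q) := by rw [hj₅]; exact hS₅.mono_f
      exact mono_of_mono j₅ (kernel.ι q)
    -- cK is epi, via the pullback of e and σ
    have hφcond : pullback.snd e σ ≫ q = 0 := by
      rw [hqdef, ← Category.assoc, ← pullback.condition, Category.assoc, w₂, comp_zero]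
    let φ : pullback e σ ⟶ kernel q := kernel.lift q (pullback.snd e σ) hφcond
    have hφ : φ ≫ kernel.ι q = pullback.snd e σ := kernel.lift_ι _ _ _
    have hφcK : φ ≫ cK = pullback.fst e σ := by
      rw [← cancel_mono e, Category.assoc, hcK, reassoc_of% hφ, pullback.condition]
    have hEpicK : Epi cK := by
      have : Epi (φ ≫ cK) := by rw [hφcK]; infer_instance
      exact epi_of_epi φ cK
    -- exactness of 0 → Z₅ → kernel q → Z₃ → 0
    have hSK : (ShortComplex.mk j₅ cK hj₅cK).ShortExact := by
      refine { exact := ShortComplex.exact_of_f_is_kernel _ ?_ }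
      refine KernelFork.IsLimit.ofι _ _
        (fun {W} k hk => hS₅.exact.lift (k ≫ kernel.ι q) ?_)
        (fun {W} k hk => ?_) (fun {W} k hk m hm => ?_)
      · rw [Category.assoc]
        have : kernel.ι q ≫ σ = cK ≫ e := hcK.symm
        rw [this, ← Category.assoc, hk, zero_comp]
      · rw [← cancel_mono (kernel.ι q), Category.assoc, hj₅, hS₅.exact.lift_f]
      · rw [← cancel_mono j₅, hm]
        rw [← cancel_mono (kernel.ι q), Category.assoc, hj₅, hS₅.exact.lift_f]
    -- the kernel sequence of q
    have hSq : (ShortComplex.mk (kernel.ι q) q (kernel.condition q)).ShortExact :=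
      { exact := ShortComplex.exact_of_f_is_kernel _ (kernelIsKernel q) }
    -- q is a right X-approximation
    have happrox : ∀ X' ∈ X, ∀ u : X' ⟶ Z₂, ∃ k : X' ⟶ X₅, k ≫ q = u := by
      intro X' hX' u
      have hvan : Subsingleton (Ext X' (kernel q) 1) :=
        ext1_middle_vanish hSK ((pairXZ.1 X').mp hX' Z₅ hZ₅) ((pairXZ.1 X').mp hX' Z₃ hZ₃)
      exact lift_along hSq hvan u
    obtain ⟨β, hβ⟩ := H X₅ Z₂ q hq hX₅ happrox (cK ≫ v)
    -- descend β to Y₂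
    let γ' : Y₂ ⟶ M := hS₅.exact.desc β (by
      show ι₅ ≫ β = 0
      rw [← hj₅, Category.assoc, hβ, ← Category.assoc, hj₅cK, zero_comp])
    have hγ' : σ ≫ γ' = β := hS₅.exact.g_desc _ _
    have he : e ≫ γ' = v := by
      rw [← cancel_epi cK, ← Category.assoc, hcK, Category.assoc, hγ', hβ]
    -- Ext computation
    have hvanY₂ : Subsingleton (Ext Z₀ Y₂ 1) := (pairZY.1 Z₀).mp hZ₀ Y₂ hY₂
    have h2 : Subsingleton (Ext Z₀ Y₀ 2) := hhZY.2 Z₀ hZ₀ Y₀ hY₀ 2 (by norm_num)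
    have hall : ∀ ξ : Ext Z₀ M 1, ξ = 0 := by
      intro ξ
      obtain ⟨θ, hθ0⟩ := ext1_surj hS₃ h2 ξ
      have hθ : θ.comp (Ext.mk₀ v) (add_zero 1) = ξ := hθ0
      rw [← hθ]
      calc θ.comp (Ext.mk₀ v) (add_zero 1)
          = θ.comp ((Ext.mk₀ e).comp (Ext.mk₀ γ') (zero_add 0)) (add_zero 1) := by
            rw [Ext.mk₀_comp_mk₀, he]
        _ = (θ.comp (Ext.mk₀ e) (add_zero 1)).comp (Ext.mk₀ γ') (add_zero 1) :=
            (Ext.comp_assoc_of_second_deg_zero _ _ _ _).symm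
        _ = 0 := by
            rw [Subsingleton.elim (θ.comp (Ext.mk₀ e) (add_zero 1)) 0, Ext.zero_comp]
    exact ⟨fun a b => by rw [hall a, hall b]⟩
end

section
/- Let (𝒳, 𝒵, 𝒴) be a complete hereditary cotorsion triple in 𝒜 and let Q, Q' ∈ 𝒳. If a morphism f : Q → Q' factors as f = p ∘ i where i is a monomorphism with projective cokernel and p is an epimorphism with kernel in 𝒵, then there exist projective objects P and F of 𝒜 such that Q ⊕ P ≅ Q' ⊕ F. (In particular, objects of 𝒳 connected by a weak equivalence of the projective model structure become isomorphic in the stable category 𝒳/𝒫.) -/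
open CategoryTheory Abelian Limits ZeroObject

universe v u

variable {A : Type u} [Category.{v} A] [Abelian A]
  [EnoughProjectives A] [EnoughInjectives A]

namespace StablyIsoAux

open DerivedCategory

universe w'

/-- The single functor in degree `0` composed with the homology functor in degree `0`
is isomorphic to the identity functor. -/
noncomputable def singleCompHomologyIso [HasDerivedCategory.{w'} A] :
    DerivedCategory.singleFunctor A 0 ⋙ DerivedCategory.homologyFunctor A 0 ≅ 𝟭 A :=
  Functor.isoWhiskerRight
    (Iso.mk ((singleFunctorsPostcompQIso A).hom.hom 0) ((singleFunctorsPostcompQIso A).inv.hom 0)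
      (by rw [← SingleFunctors.comp_hom, Iso.hom_inv_id, SingleFunctors.id_hom])
      (by rw [← SingleFunctors.comp_hom, Iso.inv_hom_id, SingleFunctors.id_hom]))
    (DerivedCategory.homologyFunctor A 0) ≪≫
  Functor.associator _ _ _ ≪≫
  Functor.isoWhiskerLeft (CochainComplex.singleFunctor A 0) (DerivedCategory.homologyFunctorFactors A 0) ≪≫
  HomologicalComplex.homologyFunctorSingleIso A (ComplexShape.up ℤ) 0

/-- From an element of `Ext X Y 0` whose composition with `mk₀ g` is `mk₀ k`, one can
extract an actual morphism `s : X ⟶ Y` with `s ≫ g = k`, by applying the homology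
functor of the derived category. -/
lemma exists_hom_of_ext₀ {X Y Z : A} (x : Ext X Y 0) (g : Y ⟶ Z) (k : X ⟶ Z)
    (hx : x.comp (Ext.mk₀ g) (add_zero 0) = Ext.mk₀ k) :
    ∃ s : X ⟶ Y, s ≫ g = k := by
  letI := HasDerivedCategory.standard A
  have h1 : (x.comp (Ext.mk₀ g) (add_zero 0)).hom = (Ext.mk₀ k).hom := by rw [hx]
  rw [Ext.comp_hom, Ext.mk₀_hom, Ext.mk₀_hom] at h1
  obtain ⟨u, hu⟩ := (ShiftedHom.homEquiv (X := (DerivedCategory.singleFunctor A 0).obj X)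
    (Y := (DerivedCategory.singleFunctor A 0).obj Y) ((0 : ℕ) : ℤ) (by simp)).surjective x.hom
  rw [ShiftedHom.homEquiv_apply] at hu
  rw [← hu, ShiftedHom.mk₀_comp_mk₀] at h1
  have h2 : u ≫ (DerivedCategory.singleFunctor A 0).map g =
      (DerivedCategory.singleFunctor A 0).map k := by
    apply (ShiftedHom.homEquiv ((0 : ℕ) : ℤ) (by simp)).injective
    rw [ShiftedHom.homEquiv_apply, ShiftedHom.homEquiv_apply]
    exact h1
  set H := DerivedCategory.homologyFunctor A 0
  set ι := singleCompHomologyIso (A := A)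
  refine ⟨ι.inv.app X ≫ H.map u ≫ ι.hom.app Y, ?_⟩
  have hnat : H.map ((DerivedCategory.singleFunctor A 0).map g) ≫ ι.hom.app Z =
      ι.hom.app Y ≫ g := ι.hom.naturality g
  have hnatk : H.map ((DerivedCategory.singleFunctor A 0).map k) ≫ ι.hom.app Z =
      ι.hom.app X ≫ k := ι.hom.naturality k
  simp only [Category.assoc]
  rw [← hnat, ← Functor.map_comp_assoc, h2, hnatk]
  simp

/-- The short complex `kernel p ⟶ X ⟶ Y` associated to an epimorphism is short exact. -/
lemma shortExact_kernel {X Y : A} (p : X ⟶ Y) [Epi p] :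
    (ShortComplex.mk (kernel.ι p) p (kernel.condition p)).ShortExact where
  exact := ShortComplex.exact_of_f_is_kernel _ (kernelIsKernel p)
  mono_f := by dsimp; infer_instance
  epi_g := by dsimp; infer_instance

/-- The short complex `X ⟶ Y ⟶ cokernel i` associated to a monomorphism is short exact. -/
lemma shortExact_cokernel {X Y : A} (i : X ⟶ Y) [Mono i] :
    (ShortComplex.mk i (cokernel.π i) (cokernel.condition i)).ShortExact where
  exact := ShortComplex.exact_of_g_is_cokernel _ (cokernelIsCokernel i)
  mono_f := by dsimp; infer_instance
  epi_g := by dsimp; infer_instance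

end StablyIsoAux


/-- Let `(𝒳, 𝒵, 𝒴)` be a complete hereditary cotorsion triple and `Q, Q' ∈ 𝒳`.
If `f : Q ⟶ Q'` factors as a monomorphism with projective cokernel followed by an
epimorphism with kernel in `𝒵` (a weak equivalence of the projective model
structure), then `Q ⊕ P ≅ Q' ⊕ F` for some projective objects `P`, `F`. -/
theorem stably_iso_of_weakEquiv (Xs Zs Ys : Set A)
    (h : IsCompleteHereditaryCotorsionTriple Xs Zs Ys)
    {Q Q' : A} (hQ : Q ∈ Xs) (hQ' : Q' ∈ Xs) (f : Q ⟶ Q')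
    (hf : ∃ (M : A) (i : Q ⟶ M) (p : M ⟶ Q'),
      i ≫ p = f ∧ Mono i ∧ Projective (cokernel i) ∧ Epi p ∧ kernel p ∈ Zs) :
    ∃ (P F : A), Projective P ∧ Projective F ∧ Nonempty ((Q ⊞ P) ≅ (Q' ⊞ F)) := by
  obtain ⟨M, i, p, hip, hmono, hproj, hepi, hker⟩ := hf
  obtain ⟨hcp1, hcp2, hh1, hh2⟩ := h
  haveI := hmono
  haveI := hepi
  have hS1 : (ShortComplex.mk i (cokernel.π i) (cokernel.condition i)).ShortExact :=
    StablyIsoAux.shortExact_cokernel i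
  have hS2 : (ShortComplex.mk (kernel.ι p) p (kernel.condition p)).ShortExact :=
    StablyIsoAux.shortExact_kernel p
  -- Step A : `Ext¹(cokernel i, Z) = 0` for `Z ∈ Zs`
  have hC : ∀ Z ∈ Zs, ∀ e : Ext (cokernel i) Z 1, e = 0 := by
    intro Z hZ e
    obtain ⟨Z₀, X₀, f₀, g₀, w₀, hse₀, hX₀, hZ₀⟩ := (hcp1.2 (cokernel i)).1
    haveI : Projective (ShortComplex.mk f₀ g₀ w₀).X₃ := hproj
    let spl := hse₀.splittingOfProjective
    have hs : spl.s ≫ g₀ = 𝟙 (cokernel i) := spl.s_g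
    haveI hX₀Z : Subsingleton (Ext X₀ Z 1) := (hcp1.1.1 X₀).1 hX₀ Z hZ
    have h0 : (Ext.mk₀ g₀).comp e (zero_add 1) = 0 := Subsingleton.elim _ _
    calc e = (Ext.mk₀ (𝟙 (cokernel i))).comp e (zero_add 1) := (Ext.mk₀_id_comp e).symm
    _ = (Ext.mk₀ (spl.s ≫ g₀)).comp e (zero_add 1) := by rw [hs]
    _ = (Ext.mk₀ spl.s).comp ((Ext.mk₀ g₀).comp e (zero_add 1)) (zero_add 1) := by
        rw [Ext.mk₀_comp_mk₀_assoc]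
    _ = 0 := by rw [h0, Ext.comp_zero]
  -- Step B : `Ext¹(M, Z) = 0` for `Z ∈ Zs`
  have hM : ∀ Z ∈ Zs, ∀ e : Ext M Z 1, e = 0 := by
    intro Z hZ e
    haveI hQZ : Subsingleton (Ext Q Z 1) := (hcp1.1.1 Q).1 hQ Z hZ
    have h0 : (Ext.mk₀ i).comp e (zero_add 1) = 0 := Subsingleton.elim _ _
    obtain ⟨x₁, hx₁⟩ := Ext.contravariant_sequence_exact₂ hS1 Z e h0
    rw [← hx₁, hC Z hZ x₁, Ext.comp_zero]
  -- Step C : `Ext¹(kernel p, Z) = 0` for `Z ∈ Zs`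
  have hKX : ∀ Z ∈ Zs, ∀ e : Ext (kernel p) Z 1, e = 0 := by
    intro Z hZ e
    haveI h2 : Subsingleton (Ext Q' Z 2) := hh1.2 Q' hQ' Z hZ 2 (by omega)
    have h0 : hS2.extClass.comp e (show 1 + 1 = 2 from rfl) = 0 := Subsingleton.elim _ _
    obtain ⟨x₂, hx₂⟩ := Ext.contravariant_sequence_exact₁ hS2 Z e (show 1 + 1 = 2 from rfl) h0
    rw [← hx₂, hM Z hZ x₂, Ext.comp_zero]
  -- Step D : `Ext¹(kernel p, N) = 0` for every `N`
  have hKall : ∀ N : A, ∀ e : Ext (kernel p) N 1, e = 0 := by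
    intro N e
    obtain ⟨Y₀, Z₂, f₂, g₂, w₂, hseT, hZ₂, hY₀⟩ := (hcp2.2 N).1
    haveI h2 : Subsingleton (Ext (kernel p) Y₀ 2) := hh2.2 _ hker Y₀ hY₀ 2 (by omega)
    have h0 : e.comp hseT.extClass (show 1 + 1 = 2 from rfl) = 0 := Subsingleton.elim _ _
    obtain ⟨x₂, hx₂⟩ :=
      Ext.covariant_sequence_exact₃ (kernel p) hseT e (show 1 + 1 = 2 from rfl) h0
    rw [← hx₂, hKX Z₂ hZ₂ x₂, Ext.zero_comp]
  -- Step E : `kernel p` is projective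
  have hKproj : Projective (kernel p) := by
    constructor
    intro E W kk ee hee
    have hU : (ShortComplex.mk (kernel.ι ee) ee (kernel.condition ee)).ShortExact :=
      StablyIsoAux.shortExact_kernel ee
    have h0 : (Ext.mk₀ kk).comp hU.extClass (zero_add 1) = 0 := hKall _ _
    obtain ⟨x₂, hx₂⟩ := Ext.covariant_sequence_exact₃ (kernel p) hU (Ext.mk₀ kk) (zero_add 1) h0
    exact StablyIsoAux.exists_hom_of_ext₀ x₂ ee kk hx₂
  -- Step F : split the short exact sequence `0 ⟶ kernel p ⟶ M ⟶ Q' ⟶ 0`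
  haveI hsubQ'K : Subsingleton (Ext Q' (kernel p) 1) := (hcp1.1.2 (kernel p)).1 hker Q' hQ'
  have h0 : (Ext.mk₀ (𝟙 Q')).comp hS2.extClass (zero_add 1) = 0 := Subsingleton.elim _ _
  obtain ⟨x₂, hx₂⟩ := Ext.covariant_sequence_exact₃ Q' hS2 (Ext.mk₀ (𝟙 Q')) (zero_add 1) h0
  obtain ⟨s, hs⟩ := StablyIsoAux.exists_hom_of_ext₀ x₂ p (𝟙 Q') hx₂
  let spl2 := ShortComplex.Splitting.ofExactOfSection _ hS2.exact s hs hS2.mono_f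
  let iso2 : M ≅ kernel p ⊞ Q' := spl2.isoBinaryBiproduct
  -- Step G : split the short exact sequence `0 ⟶ Q ⟶ M ⟶ cokernel i ⟶ 0`
  haveI : Projective ((ShortComplex.mk i (cokernel.π i) (cokernel.condition i)).X₃) := hproj
  let spl1 := hS1.splittingOfProjective
  let iso1 : M ≅ Q ⊞ cokernel i := spl1.isoBinaryBiproduct
  exact ⟨cokernel i, kernel p, hproj, hKproj,
    ⟨iso1.symm ≪≫ iso2 ≪≫ biprod.braiding (kernel p) Q'⟩⟩
end

section
/- Let (𝒳, 𝒵, 𝒴) be a complete hereditary cotorsion triple in 𝒜 and let M be an object of 𝒜. If there exists an integer n ≥ 0 such that Ext^k(X, M) = 0 for every X ∈ 𝒳 and every k ≥ n + 1, then M ∈ 𝒵; in particular Ext^k(X, M) = 0 for every X ∈ 𝒳 and every k ≥ 1. (Thus the 𝒳-injective dimension of any object is either 0 or ∞.) -/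
open CategoryTheory Abelian Limits ZeroObject

universe v u

variable {A : Type u} [Category.{v} A] [Abelian A]
  [EnoughProjectives A] [EnoughInjectives A]

/-- If in a short exact sequence `0 → X₁ → X₂ → X₃ → 0`, `Ext^n(X₂, Y)` and
`Ext^{n+1}(X₃, Y)` vanish, then `Ext^n(X₁, Y)` vanishes. -/
lemma extZero_contra {S : ShortComplex A} (hS : S.ShortExact) (Y : A) (n : ℕ)
    (h2 : Subsingleton (Abelian.Ext S.X₂ Y n))
    (h3 : Subsingleton (Abelian.Ext S.X₃ Y (n + 1))) :
    Subsingleton (Abelian.Ext S.X₁ Y n) := by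
  refine subsingleton_of_forall_eq 0 (fun x => ?_)
  obtain ⟨x₂, hx₂⟩ := Ext.contravariant_sequence_exact₁ hS Y x
    (show 1 + n = n + 1 by omega) (Subsingleton.elim _ _)
  rw [← hx₂, Subsingleton.elim x₂ 0, Ext.comp_zero]

/-- If in a short exact sequence `0 → X₁ → X₂ → X₃ → 0`, `Ext^n(X₁, Y)` and
`Ext^n(X₃, Y)` vanish, then `Ext^n(X₂, Y)` vanishes. -/
lemma extZero_contra_mid {S : ShortComplex A} (hS : S.ShortExact) (Y : A) (n : ℕ)
    (h1 : Subsingleton (Abelian.Ext S.X₁ Y n))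
    (h3 : Subsingleton (Abelian.Ext S.X₃ Y n)) :
    Subsingleton (Abelian.Ext S.X₂ Y n) := by
  refine subsingleton_of_forall_eq 0 (fun x => ?_)
  obtain ⟨x₁, hx₁⟩ := Ext.contravariant_sequence_exact₂ hS Y x (Subsingleton.elim _ _)
  rw [← hx₁, Subsingleton.elim x₁ 0, Ext.comp_zero]

/-- If in a short exact sequence `0 → X₁ → X₂ → X₃ → 0`, `Ext^n(X, X₂)` and
`Ext^{n+1}(X, X₁)` vanish, then `Ext^n(X, X₃)` vanishes. -/
lemma extZero_cov {S : ShortComplex A} (hS : S.ShortExact) (X : A) (n : ℕ)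
    (h2 : Subsingleton (Abelian.Ext X S.X₂ n))
    (h1 : Subsingleton (Abelian.Ext X S.X₁ (n + 1))) :
    Subsingleton (Abelian.Ext X S.X₃ n) := by
  refine subsingleton_of_forall_eq 0 (fun x => ?_)
  obtain ⟨x₂, hx₂⟩ := Ext.covariant_sequence_exact₃ X hS x rfl (Subsingleton.elim _ _)
  rw [← hx₂, Subsingleton.elim x₂ 0, Ext.zero_comp]

/-- Let `(𝒳, 𝒵, 𝒴)` be a complete hereditary cotorsion triple and `M` an object.
If `Ext^k(X, M) = 0` for every `X ∈ 𝒳` and every `k ≥ n + 1` for some `n ≥ 0`,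
then `M ∈ 𝒵`; in particular `Ext^k(X, M) = 0` for every `X ∈ 𝒳` and every `k ≥ 1`.
(The `𝒳`-injective dimension of any object is `0` or `∞`.) -/
theorem xInjDim_zero_or_infty (Xs Zs Ys : Set A)
    (h : IsCompleteHereditaryCotorsionTriple Xs Zs Ys)
    (M : A) (n : ℕ) (hvan : ∀ X ∈ Xs, ∀ k : ℕ, n + 1 ≤ k → extZero X M k) :
    M ∈ Zs ∧ ∀ X ∈ Xs, ∀ k : ℕ, 1 ≤ k → extZero X M k := by
  obtain ⟨⟨cpXZ, compXZ⟩, ⟨cpZY, compZY⟩, ⟨-, herXZ⟩, ⟨-, herZY⟩⟩ := h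
  -- Objects in `Xs ∩ Zs` have vanishing `Ext^k(W, N)` for all `N` and `k ≥ 1`.
  have hproj : ∀ W, W ∈ Xs → W ∈ Zs → ∀ N : A, ∀ k : ℕ, 1 ≤ k →
      Subsingleton (Abelian.Ext W N k) := by
    intro W hWX hWZ N k hk
    -- use a s.e.s. `0 → Y₁ → Z₁ → N → 0` with `Z₁ ∈ Zs`, `Y₁ ∈ Ys`
    obtain ⟨⟨Y₁, Z₁, f, g, w, hse, hZ₁, hY₁⟩, -⟩ := compZY N
    exact extZero_cov hse W k (herXZ W hWX Z₁ hZ₁ k hk)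
      (herZY W hWZ Y₁ hY₁ (k + 1) (by omega))
  -- key vanishing, by downward induction
  have key : ∀ d : ℕ, ∀ X ∈ Xs, ∀ k : ℕ, 1 ≤ k → n + 1 ≤ k + d → extZero X M k := by
    intro d
    induction d with
    | zero => intro X hX k _ hk; exact hvan X hX k (by omega)
    | succ d ih =>
      intro X hX k hk hkd
      -- s.e.s. `0 → X → Z'' → X'' → 0` with `Z'' ∈ Zs`, `X'' ∈ Xs`
      obtain ⟨-, Z'', X'', f, g, w, hse, hX'', hZ''⟩ := compXZ X
      -- `Z'' ∈ Xs` as well, since `X, X'' ∈ Xs`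
      have hZ''X : Z'' ∈ Xs := by
        rw [cpXZ.1]
        intro Z0 hZ0
        exact extZero_contra_mid hse Z0 1 ((cpXZ.1 X).mp hX Z0 hZ0)
          ((cpXZ.1 X'').mp hX'' Z0 hZ0)
      exact extZero_contra hse M k (hproj Z'' hZ''X hZ'' M k hk)
        (ih X'' hX'' (k + 1) (by omega) (by omega))
  have main : ∀ X ∈ Xs, ∀ k : ℕ, 1 ≤ k → extZero X M k :=
    fun X hX k hk => key n X hX k hk (by omega)
  exact ⟨(cpXZ.2 M).mpr (fun X' hX' => main X' hX' 1 le_rfl), main⟩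
end

section
/- Let (𝒳, 𝒵, 𝒴) be a complete hereditary cotorsion triple in 𝒜 and let M be an object of 𝒜. If there exists an integer n ≥ 0 such that Ext^k(M, Y) = 0 for every Y ∈ 𝒴 and every k ≥ n + 1, then M ∈ 𝒵; in particular Ext^k(M, Y) = 0 for every Y ∈ 𝒴 and every k ≥ 1. (Thus the 𝒴-projective dimension of any object is either 0 or ∞.) -/
open CategoryTheory Abelian Limits ZeroObject

universe v u

variable {A : Type u} [Category.{v} A] [Abelian A]
  [EnoughProjectives A] [EnoughInjectives A]

/-- Auxiliary: vanishing transfer along the contravariant long exact sequence. -/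
lemma extZero_X₁_of_ses {S : ShortComplex A} (hS : S.ShortExact) (Y : A) (k : ℕ)
    (h2 : extZero S.X₂ Y k) (h3 : extZero S.X₃ Y (1 + k)) :
    extZero S.X₁ Y k := by
  have hall : ∀ x : Abelian.Ext S.X₁ Y k, x = 0 := by
    intro x
    obtain ⟨x₂, hx₂⟩ := Abelian.Ext.contravariant_sequence_exact₁ hS Y x rfl
      (@Subsingleton.elim _ h3 _ _)
    rw [← hx₂, @Subsingleton.elim _ h2 x₂ 0, Abelian.Ext.comp_zero]
  exact ⟨fun a b => by rw [hall a, hall b]⟩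

/-- Auxiliary: vanishing transfer along the covariant long exact sequence. -/
lemma extZero_X₃_of_ses {S : ShortComplex A} (hS : S.ShortExact) (X : A) (k : ℕ)
    (h2 : extZero X S.X₂ k) (h1 : extZero X S.X₁ (k + 1)) :
    extZero X S.X₃ k := by
  have hall : ∀ x : Abelian.Ext X S.X₃ k, x = 0 := by
    intro x
    obtain ⟨x₂, hx₂⟩ := Abelian.Ext.covariant_sequence_exact₃ X hS x rfl
      (@Subsingleton.elim _ h1 _ _)
    rw [← hx₂, @Subsingleton.elim _ h2 x₂ 0, Abelian.Ext.zero_comp]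
  exact ⟨fun a b => by rw [hall a, hall b]⟩

/-- Let `(𝒳, 𝒵, 𝒴)` be a complete hereditary cotorsion triple and `M` an object.
If `Ext^k(M, Y) = 0` for every `Y ∈ 𝒴` and every `k ≥ n + 1` for some `n ≥ 0`,
then `M ∈ 𝒵`; in particular `Ext^k(M, Y) = 0` for every `Y ∈ 𝒴` and every `k ≥ 1`.
(The `𝒴`-projective dimension of any object is `0` or `∞`.) -/
theorem yProjDim_zero_or_infty (Xs Zs Ys : Set A)
    (h : IsCompleteHereditaryCotorsionTriple Xs Zs Ys)
    (M : A) (n : ℕ) (hvan : ∀ Y ∈ Ys, ∀ k : ℕ, n + 1 ≤ k → extZero M Y k) :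
    M ∈ Zs ∧ ∀ Y ∈ Ys, ∀ k : ℕ, 1 ≤ k → extZero M Y k := by
  obtain ⟨⟨pXZ, _⟩, ⟨pZY, compZY⟩, ⟨_, herXZ⟩, ⟨_, herZY⟩⟩ := h
  suffices hz : M ∈ Zs by
    exact ⟨hz, fun Y hY k hk => herZY M hz Y hY k hk⟩
  induction n generalizing M with
  | zero => exact (pZY.1 M).mpr (fun Y hY => hvan Y hY 1 le_rfl)
  | succ n ih =>
    obtain ⟨Y1, W, f, g, w, hS, hW, hY1⟩ := (compZY M).1
    have hY1Z : Y1 ∈ Zs := by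
      apply ih Y1
      intro Y hY k hk
      exact extZero_X₁_of_ses hS Y k (herZY W hW Y hY k (by omega))
        (hvan Y hY (1 + k) (by omega))
    refine (pXZ.2 M).mpr (fun X' hX' => ?_)
    exact extZero_X₃_of_ses hS X' 1 ((pXZ.2 W).mp hW X' hX')
      (herXZ X' hX' Y1 hY1Z 2 (by omega))
end

section
/- Let (𝒳, 𝒵, 𝒴) be a complete hereditary cotorsion triple in 𝒜, let N be an object of 𝒜, and let n ≥ 1 be an integer. Suppose 0 → N → Y⁰ → ⋯ → Y^{n-2} → Y^{n-1} → L → 0 is an exact sequence in 𝒜 with Y⁰, …, Y^{n-1} ∈ 𝒴. Then L ∈ 𝒴 if and only if Ext^k(Z, N) = 0 for every Z ∈ 𝒵 and every k ≥ n + 1. In particular, whether the n-th cosyzygy L lies in 𝒴 does not depend on the chosen exact sequence. -/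
open CategoryTheory Abelian Limits ZeroObject

universe v u

variable {A : Type u} [Category.{v} A] [Abelian A]
  [EnoughProjectives A] [EnoughInjectives A]

section Aux

open Abelian.Ext

/-- Transfer of `Ext`-vanishing along an isomorphism in the second variable. -/
lemma ext_subsingleton_of_iso {M M' : A} (Z : A) (e : M ≅ M') (k : ℕ)
    (h : Subsingleton (Abelian.Ext Z M k)) : Subsingleton (Abelian.Ext Z M' k) := by
  rw [subsingleton_iff_forall_eq (0 : Abelian.Ext Z M' k)]
  intro y
  have h1 : y.comp (Ext.mk₀ e.inv) (add_zero k) = 0 := h.elim _ _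
  have h2 := congrArg (fun t => t.comp (Ext.mk₀ e.hom) (add_zero k)) h1
  simpa only [Ext.comp_assoc_of_third_deg_zero, Ext.mk₀_comp_mk₀, Iso.inv_hom_id,
    Ext.comp_mk₀_id, Ext.zero_comp] using h2

lemma ext_subsingleton_iff_of_iso {M M' : A} (Z : A) (e : M ≅ M') (k : ℕ) :
    Subsingleton (Abelian.Ext Z M k) ↔ Subsingleton (Abelian.Ext Z M' k) :=
  ⟨ext_subsingleton_of_iso Z e k, ext_subsingleton_of_iso Z e.symm k⟩

/-- Dimension shifting along one short exact sequence with middle term having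
vanishing higher `Ext`s. -/
lemma step_iff {S : ShortComplex A} (hS : S.ShortExact) (Z : A)
    (hY : ∀ i : ℕ, 1 ≤ i → Subsingleton (Abelian.Ext Z S.X₂ i))
    (k : ℕ) (hk : 1 ≤ k) :
    Subsingleton (Abelian.Ext Z S.X₁ (k + 1)) ↔ Subsingleton (Abelian.Ext Z S.X₃ k) := by
  constructor
  · intro h
    rw [subsingleton_iff_forall_eq (0 : Abelian.Ext Z S.X₃ k)]
    intro x
    have hx : x.comp hS.extClass rfl = 0 := h.elim _ _
    obtain ⟨x₂, hx₂⟩ := Ext.covariant_sequence_exact₃ Z hS x rfl hx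
    have hz : x₂ = 0 := (hY k hk).elim _ _
    rw [← hx₂, hz, Ext.zero_comp]
  · intro h
    rw [subsingleton_iff_forall_eq (0 : Abelian.Ext Z S.X₁ (k + 1))]
    intro x
    have hx : x.comp (Ext.mk₀ S.f) (add_zero _) = 0 := (hY (k + 1) (by omega)).elim _ _
    obtain ⟨x₃, hx₃⟩ := Ext.covariant_sequence_exact₁ Z hS x hx rfl
    have hz : x₃ = 0 := h.elim _ _
    rw [← hx₃, hz, Ext.zero_comp]

/-- From an exact complex `X → Y → Z'`, the induced complex
`im(f) → Y → im(g)` is short exact. -/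
lemma image_shortExact {X Y Z' : A} (f : X ⟶ Y) (g : Y ⟶ Z') (w : f ≫ g = 0)
    (hex : (ShortComplex.mk f g w).Exact) :
    ∃ (w' : Abelian.image.ι f ≫ Abelian.factorThruImage g = 0),
      (ShortComplex.mk (Abelian.image.ι f) (Abelian.factorThruImage g) w').ShortExact := by
  have hw1 : Abelian.image.ι f ≫ g = 0 := Abelian.image_ι_comp_eq_zero w
  have w1 : f ≫ Abelian.factorThruImage g = 0 := by
    rw [← cancel_mono (Abelian.image.ι g), Category.assoc, Abelian.image.fac, Limits.zero_comp, w]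
  have w' : Abelian.image.ι f ≫ Abelian.factorThruImage g = 0 := by
    rw [← cancel_mono (Abelian.image.ι g), Category.assoc, Abelian.image.fac, Limits.zero_comp, hw1]
  refine ⟨w', ?_⟩
  have hex1 : (ShortComplex.mk f (Abelian.factorThruImage g) w1).Exact := by
    refine (ShortComplex.exact_iff_of_epi_of_isIso_of_mono
      (S₁ := ShortComplex.mk f (Abelian.factorThruImage g) w1)
      (S₂ := ShortComplex.mk f g w)
      ⟨𝟙 _, 𝟙 _, Abelian.image.ι g, by simp, by simp [Abelian.image.fac]⟩).2 hex
  have hex2 : (ShortComplex.mk (Abelian.image.ι f) (Abelian.factorThruImage g) w').Exact := by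
    refine (ShortComplex.exact_iff_of_epi_of_isIso_of_mono
      (S₁ := ShortComplex.mk f (Abelian.factorThruImage g) w1)
      (S₂ := ShortComplex.mk (Abelian.image.ι f) (Abelian.factorThruImage g) w')
      ⟨Abelian.factorThruImage f, 𝟙 _, 𝟙 _, by simp [Abelian.image.fac], by simp⟩).1 hex1
  exact { exact := hex2 }

/-- Iterated dimension shifting along a chain of short exact sequences. -/
lemma chain_iff (Z : A) (d : ℕ) (W : ℕ → A)
    (hW : ∀ j, j < d → ∃ (Y : A) (f : W j ⟶ Y) (g : Y ⟶ W (j + 1)) (w : f ≫ g = 0),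
      (ShortComplex.mk f g w).ShortExact ∧ ∀ l, 1 ≤ l → Subsingleton (Abelian.Ext Z Y l)) :
    ∀ k, 1 ≤ k →
      (Subsingleton (Abelian.Ext Z (W 0) (k + d)) ↔ Subsingleton (Abelian.Ext Z (W d) k)) := by
  induction d with
  | zero => intro k hk; exact Iff.rfl
  | succ d ih =>
    intro k hk
    obtain ⟨Y, f, g, w, hse, hY⟩ := hW d (by omega)
    have h1 := step_iff hse Z hY k hk
    have h2 := ih (fun j hj => hW j (by omega)) (k + 1) (by omega)
    have e : k + (d + 1) = (k + 1) + d := by omega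
    rw [e]
    exact h2.trans h1

/-- Dimension shifting along an exact sequence `0 → N → Y⁰ → ⋯ → Y^{n-1} → L → 0`. -/
lemma dim_shift (n : ℕ) (hn : 1 ≤ n) (S : ComposableArrows A (n + 3)) (hS : S.Exact)
    (hzero : IsZero (S.obj' 0)) (hzero' : IsZero (S.obj' (n + 3)))
    (Z : A)
    (hmid : ∀ (i : ℕ), 2 ≤ i → ∀ (hi : i ≤ n + 1), ∀ l, 1 ≤ l →
      Subsingleton (Abelian.Ext Z (S.obj' i (by omega : i ≤ n + 1 + 2)) l))
    (k : ℕ) (hk : 1 ≤ k) :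
    (Subsingleton (Abelian.Ext Z (S.obj' 1 (by omega)) (k + n)) ↔
      Subsingleton (Abelian.Ext Z (S.obj' (n + 2) (by omega)) k)) := by
  classical
  let W : ℕ → A := fun j =>
    if h : j ≤ n then Abelian.image (S.map' (j + 1) (j + 2) (by omega) (by omega))
    else S.obj' 1
  have hWeq : ∀ (j : ℕ) (hj : j ≤ n),
      W j = Abelian.image (S.map' (j + 1) (j + 2) (by omega) (by omega)) :=
    fun j hj => dif_pos hj
  have hWchain : ∀ j, j < n → ∃ (Y : A) (f : W j ⟶ Y) (g : Y ⟶ W (j + 1)) (w : f ≫ g = 0),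
      (ShortComplex.mk f g w).ShortExact ∧ ∀ l, 1 ≤ l → Subsingleton (Abelian.Ext Z Y l) := by
    intro j hj
    rw [hWeq j (by omega), hWeq (j + 1) (by omega)]
    obtain ⟨w', hse⟩ := image_shortExact (S.map' (j + 1) (j + 2) (by omega) (by omega))
      (S.map' (j + 2) (j + 3) (by omega) (by omega))
      (hS.toIsComplex.zero' (j + 1) (j + 2) (j + 3))
      (hS.exact (j + 1) (by omega))
    exact ⟨S.obj' (j + 2) (by omega), _, _, w', hse,
      fun l hl => hmid (j + 2) (by omega) (by omega) l hl⟩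
  have key := chain_iff Z n W hWchain k hk
  -- identify the endpoints of the chain
  have hmono : Mono (S.map' 1 2 (by omega) (by omega)) := by
    have h0 : (S.sc hS.toIsComplex 0 (by omega)).f = 0 :=
      hzero.eq_of_src _ _
    exact (ShortComplex.exact_iff_mono _ h0).1 (hS.exact 0 (by omega))
  have hepi : Epi (S.map' (n + 1) (n + 2) (by omega) (by omega)) := by
    have h0 : (S.sc hS.toIsComplex (n + 1) (by omega)).g = 0 :=
      hzero'.eq_of_tgt _ _
    exact (ShortComplex.exact_iff_epi _ h0).1 (hS.exact (n + 1) (by omega))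
  have hiso1 : IsIso (Abelian.factorThruImage (S.map' 1 2 (by omega) (by omega))) := by
    haveI := hmono
    exact isIso_of_mono_of_epi _
  have hiso2 : IsIso (Abelian.image.ι (S.map' (n + 1) (n + 2) (by omega) (by omega))) := by
    haveI := hepi
    haveI : Epi (Abelian.image.ι (S.map' (n + 1) (n + 2) (by omega) (by omega))) := by
      exact epi_of_epi_fac (Abelian.image.fac _)
    exact isIso_of_mono_of_epi _
  have e₁ : S.obj' 1 ≅ W 0 := by
    rw [hWeq 0 (by omega)]
    exact @asIso _ _ _ _ _ hiso1
  have e₂ : W n ≅ S.obj' (n + 2) := by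
    rw [hWeq n (by omega)]
    exact @asIso _ _ _ _ _ hiso2
  rw [ext_subsingleton_iff_of_iso Z e₁ (k + n),
    ← ext_subsingleton_iff_of_iso Z e₂ k]
  exact key

end Aux

/-- Let `(𝒳, 𝒵, 𝒴)` be a complete hereditary cotorsion triple, `N` an object,
`n ≥ 1`, and let `0 → N → Y⁰ → ⋯ → Y^{n-1} → L → 0` be an exact sequence with all
`Y^j ∈ 𝒴` (encoded as an exact sequence of `n + 3` composable arrows whose two
extreme objects are zero, with `N = S.obj' 1`, `L = S.obj' (n + 2)`, and the middle
objects in `𝒴`). Then `L ∈ 𝒴` iff `Ext^k(Z, N) = 0` for all `Z ∈ 𝒵`, `k ≥ n + 1`. -/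
theorem nth_cosyzygy_mem_iff (Xs Zs Ys : Set A)
    (h : IsCompleteHereditaryCotorsionTriple Xs Zs Ys)
    (n : ℕ) (hn : 1 ≤ n)
    (S : ComposableArrows A (n + 3)) (hS : S.Exact)
    (hzero : IsZero (S.obj' 0)) (hzero' : IsZero (S.obj' (n + 3)))
    (hmid : ∀ (i : ℕ) (h2 : 2 ≤ i) (hi : i ≤ n + 1), S.obj' i (by omega) ∈ Ys) :
    S.obj' (n + 2) ∈ Ys ↔
      ∀ Z ∈ Zs, ∀ k : ℕ, n + 1 ≤ k → extZero Z (S.obj' 1) k := by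
  obtain ⟨hc1, hc2, hh1, hh2⟩ := h
  obtain ⟨⟨hmemZ, hmemY⟩, hher⟩ := hh2
  have hmid' : ∀ Z0 ∈ Zs, ∀ (i : ℕ), 2 ≤ i → ∀ (hi : i ≤ n + 1), ∀ l, 1 ≤ l →
      Subsingleton (Abelian.Ext Z0 (S.obj' i (by omega)) l) :=
    fun Z0 hZ0 i h2 hi l hl => hher Z0 hZ0 _ (hmid i h2 hi) l hl
  constructor
  · intro hL Z hZ k hk
    have hd := dim_shift n hn S hS hzero hzero' Z (hmid' Z hZ) (k - n) (by omega)
    have hkk : k - n + n = k := by omega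
    rw [← hkk]
    exact hd.2 (hher Z hZ _ hL (k - n) (by omega))
  · intro hext
    rw [hmemY]
    intro Z hZ
    have hd := dim_shift n hn S hS hzero hzero' Z (hmid' Z hZ) 1 le_rfl
    exact hd.1 (hext Z hZ (1 + n) (by omega))
end

section
/- Let (𝒳, 𝒵, 𝒴) be a complete hereditary cotorsion triple in 𝒜 and let n ≥ 0 be an integer. Then Ext^k(M, Z) = 0 for every object M of 𝒜, every Z ∈ 𝒵 and every k ≥ n + 1, if and only if Ext^k(Z, N) = 0 for every object N of 𝒜, every Z ∈ 𝒵 and every k ≥ n + 1. (That is, the global 𝒵-projective dimension of 𝒜 equals its global 𝒵-injective dimension; equivalently, the global 𝒳-resolution dimension of 𝒜 equals the global 𝒴-coresolution dimension of 𝒜.) -/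
open CategoryTheory Abelian Limits ZeroObject

universe v u

variable {A : Type u} [Category.{v} A] [Abelian A]
  [EnoughProjectives A] [EnoughInjectives A]

/-- Let `(𝒳, 𝒵, 𝒴)` be a complete hereditary cotorsion triple and `n ≥ 0`. Then
`Ext^k(M, Z) = 0` for all objects `M`, all `Z ∈ 𝒵` and all `k ≥ n + 1` iff
`Ext^k(Z, N) = 0` for all objects `N`, all `Z ∈ 𝒵` and all `k ≥ n + 1`.
(The global `𝒵`-projective dimension of `𝒜` equals its global `𝒵`-injective
dimension.) -/
theorem global_zProjDim_eq_zInjDim (Xs Zs Ys : Set A)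
    (h : IsCompleteHereditaryCotorsionTriple Xs Zs Ys) (n : ℕ) :
    (∀ M : A, ∀ Z ∈ Zs, ∀ k : ℕ, n + 1 ≤ k → extZero M Z k) ↔
    (∀ N : A, ∀ Z ∈ Zs, ∀ k : ℕ, n + 1 ≤ k → extZero Z N k) := by
  obtain ⟨⟨-, hXZcomp⟩, ⟨-, hZYcomp⟩, ⟨-, hXZher⟩, ⟨-, hZYher⟩⟩ := h
  constructor
  · intro lhs N Z hZ k hk
    -- special sequence 0 → Y → C → N → 0 with C ∈ Zs, Y ∈ Ys
    obtain ⟨⟨Y, C, f, g, w, hSE, hC, hY⟩, -⟩ := hZYcomp N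
    constructor
    intro a b
    suffices hz : ∀ x : Ext Z N k, x = 0 by rw [hz a, hz b]
    intro x
    -- Ext Z C k → Ext Z N k → Ext Z Y (k+1), both ends vanish
    have h1 : extZero Z Y (k + 1) := hZYher Z hZ Y hY (k + 1) (by omega)
    have h2 : extZero Z C k := lhs Z C hC k hk
    have hx : x.comp hSE.extClass rfl = 0 := h1.1 _ _
    obtain ⟨x₂, hx₂⟩ := Ext.covariant_sequence_exact₃ Z hSE x rfl hx
    have : x₂ = 0 := h2.1 _ _
    rw [this] at hx₂
    rw [← hx₂, Ext.zero_comp]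
  · intro rhs M Z hZ k hk
    -- special sequence 0 → M → C → X' → 0 with C ∈ Zs, X' ∈ Xs
    obtain ⟨-, ⟨C, X', f, g, w, hSE, hX', hC⟩⟩ := hXZcomp M
    constructor
    intro a b
    suffices hz : ∀ x : Ext M Z k, x = 0 by rw [hz a, hz b]
    intro x
    have h1 : extZero X' Z (1 + k) := hXZher X' hX' Z hZ (1 + k) (by omega)
    have h2 : extZero C Z k := rhs Z C hC k hk
    have hx : hSE.extClass.comp x rfl = 0 := h1.1 _ _
    obtain ⟨x₂, hx₂⟩ := Ext.contravariant_sequence_exact₁ hSE Z x rfl hx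
    have : x₂ = 0 := h2.1 _ _
    rw [this] at hx₂
    rw [← hx₂, Ext.comp_zero]
end

section
/- Let (𝒳, 𝒵, 𝒴) be a complete hereditary cotorsion triple in 𝒜 and let n ≥ 0 be an integer. Then the following are equivalent: (1) Ext^k(M, Z) = 0 for every object M of 𝒜, every Z ∈ 𝒵 and every k ≥ n + 1 (the global 𝒵-projective dimension of 𝒜 is at most n); (2) every Z ∈ 𝒵 has projective dimension at most n, i.e., Ext^k(Z, N) = 0 for every object N and every k ≥ n + 1; (3) every Z ∈ 𝒵 has injective dimension at most n, i.e., Ext^k(N, Z) = 0 for every object N and every k ≥ n + 1. -/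
open CategoryTheory Abelian Limits ZeroObject

universe v u

variable {A : Type u} [Category.{v} A] [Abelian A]
  [EnoughProjectives A] [EnoughInjectives A]

section Aux

lemma ext_eq_zero_of_subsingleton {M N : A} {k : ℕ} (h : Subsingleton (Ext M N k))
    (x : Ext M N k) : x = 0 := Subsingleton.elim x 0

/-- Covariant LES middle vanishing: for `0 → X₁ → X₂ → X₃ → 0`, if `Ext T X₂ k` and
`Ext T X₁ (k+1)` vanish, then `Ext T X₃ k` vanishes. -/
lemma extZero_of_covariant {S : ShortComplex A} (hS : S.ShortExact) (T : A) (k : ℕ)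
    (h₂ : Subsingleton (Ext T S.X₂ k)) (h₁ : Subsingleton (Ext T S.X₁ (k + 1))) :
    Subsingleton (Ext T S.X₃ k) := by
  have hz : ∀ x : Ext T S.X₃ k, x = 0 := by
    intro x
    obtain ⟨x₂, hx₂⟩ := Ext.covariant_sequence_exact₃ T hS x rfl
      (ext_eq_zero_of_subsingleton h₁ _)
    rw [← hx₂, ext_eq_zero_of_subsingleton h₂ x₂, Ext.zero_comp]
  exact ⟨fun a b => by rw [hz a, hz b]⟩

/-- Contravariant LES vanishing: for `0 → X₁ → X₂ → X₃ → 0`, if `Ext X₂ T k` and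
`Ext X₃ T (1+k)` vanish, then `Ext X₁ T k` vanishes. -/
lemma extZero_of_contravariant {S : ShortComplex A} (hS : S.ShortExact) (T : A) (k : ℕ)
    (h₂ : Subsingleton (Ext S.X₂ T k)) (h₃ : Subsingleton (Ext S.X₃ T (1 + k))) :
    Subsingleton (Ext S.X₁ T k) := by
  have hz : ∀ x : Ext S.X₁ T k, x = 0 := by
    intro x
    obtain ⟨x₂, hx₂⟩ := Ext.contravariant_sequence_exact₁ hS T x rfl
      (ext_eq_zero_of_subsingleton h₃ _)
    rw [← hx₂, ext_eq_zero_of_subsingleton h₂ x₂, Ext.comp_zero]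
  exact ⟨fun a b => by rw [hz a, hz b]⟩

end Aux

/-- Let `(𝒳, 𝒵, 𝒴)` be a complete hereditary cotorsion triple and `n ≥ 0`. The
following are equivalent: (1) `Ext^k(M, Z) = 0` for every object `M`, every
`Z ∈ 𝒵` and every `k ≥ n + 1`; (2) every `Z ∈ 𝒵` has projective dimension at
most `n`; (3) every `Z ∈ 𝒵` has injective dimension at most `n`. -/
theorem global_zDim_le_iff (Xs Zs Ys : Set A)
    (h : IsCompleteHereditaryCotorsionTriple Xs Zs Ys) (n : ℕ) :
    [∀ M : A, ∀ Z ∈ Zs, ∀ k : ℕ, n + 1 ≤ k → extZero M Z k,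
     ∀ Z ∈ Zs, ∀ N : A, ∀ k : ℕ, n + 1 ≤ k → extZero Z N k,
     ∀ Z ∈ Zs, ∀ N : A, ∀ k : ℕ, n + 1 ≤ k → extZero N Z k].TFAE := by
  obtain ⟨hcXZ, hcZY, hhXZ, hhZY⟩ := h
  tfae_have 1 → 2 := by
    intro h1 Z hZ N k hk
    obtain ⟨⟨Y', Z'', f, g, w, hse, hZ'', hY'⟩, -⟩ := hcZY.2 N
    exact extZero_of_covariant hse Z k (h1 Z Z'' hZ'' k hk)
      (hhZY.2 Z hZ Y' hY' (k + 1) (by omega))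
  tfae_have 2 → 3 := by
    intro h2 Z hZ N k hk
    obtain ⟨-, ⟨Z', X', f, g, w, hse, hX', hZ'⟩⟩ := hcXZ.2 N
    exact extZero_of_contravariant hse Z k (h2 Z' hZ' Z k hk)
      (hhXZ.2 X' hX' Z hZ (1 + k) (by omega))
  tfae_have 3 → 1 := by
    intro h3 M Z hZ k hk
    exact h3 Z hZ M k hk
  tfae_finish
end
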